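/- arXiv:math/0103079 — 4 statements merged into one kernel-verified Lean document; each statement's English description precedes it below -/
import Mathlib

section
/- Let Ā be a subgroup of A, let J̄ : Ā* → H⊗H be a dynamical twist for Ā, and let x : A* → H be a function with invertible values which has zero weight with respect to Ā and satisfies ε(x(λ)) = 1 for all λ. Define J^x : A* → H⊗H by J^x(λ) = Δ(x(λ)) · J̄(λ̄) · (x²(λ))^{-1} · (x¹(λ − h^{(2)}))^{-1}, where λ̄ ∈ Ā* is the restriction of the character λ to Ā. If J^x has zero weight with respect to A, then J^x is a dynamical twist for A. -/
open scoped TensorProduct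

noncomputable section

variable {H : Type*} [Ring H] [HopfAlgebra ℂ H]

/-- The character group `A* = Hom(A, ℂˣ)` of a subgroup `A ≤ Hˣ`, written additively. -/
abbrev DChar (A : Subgroup Hˣ) : Type _ := Additive (↥A →* ℂˣ)

/-- An element of a Hopf algebra is group-like if `Δ g = g ⊗ g` and `ε g = 1`. -/
def IsGroupLike (h : H) : Prop :=
  Coalgebra.comul (R := ℂ) h = h ⊗ₜ[ℂ] h ∧ Coalgebra.counit (R := ℂ) h = (1 : ℂ)

/-- The primitive idempotent `P_μ = |A|⁻¹ ∑_{a ∈ A} μ(a)⁻¹ a` of `ℂ[A] ⊆ H`. -/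
def dP (A : Subgroup Hˣ) [Fintype A] (μ : DChar A) : H :=
  (Fintype.card A : ℂ)⁻¹ • ∑ a : A, ((((Additive.toMul μ) a)⁻¹ : ℂˣ) : ℂ) • ((a : Hˣ) : H)

/-- A zero weight element of `H` (w.r.t. `A`): commutes with every `a ∈ A`. -/
def ZeroWeight₁ (A : Subgroup Hˣ) (v : H) : Prop :=
  ∀ a : A, v * ((a : Hˣ) : H) = ((a : Hˣ) : H) * v

/-- A zero weight element of `H ⊗ H` (w.r.t. `A`): commutes with every `a ⊗ a`, `a ∈ A`. -/
def ZeroWeight₂ (A : Subgroup Hˣ) (v : H ⊗[ℂ] H) : Prop :=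
  ∀ a : A, v * (((a : Hˣ) : H) ⊗ₜ[ℂ] ((a : Hˣ) : H))
    = (((a : Hˣ) : H) ⊗ₜ[ℂ] ((a : Hˣ) : H)) * v

/-- `J ↦ J^{12,3} = (Δ ⊗ id)(J)`. -/
def J12_3 : H ⊗[ℂ] H →ₐ[ℂ] (H ⊗[ℂ] H) ⊗[ℂ] H :=
  Algebra.TensorProduct.map (Bialgebra.comulAlgHom ℂ H) (AlgHom.id ℂ H)

/-- `J ↦ J^{1,23} = (id ⊗ Δ)(J)`, written in `(H ⊗ H) ⊗ H`. -/
def J1_23 : H ⊗[ℂ] H →ₐ[ℂ] (H ⊗[ℂ] H) ⊗[ℂ] H :=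
  ((Algebra.TensorProduct.assoc ℂ ℂ ℂ H H H).symm).toAlgHom.comp
    (Algebra.TensorProduct.map (AlgHom.id ℂ H) (Bialgebra.comulAlgHom ℂ H))

/-- `(ε ⊗ id) : H ⊗ H → H`. -/
def epsId : H ⊗[ℂ] H →ₐ[ℂ] H :=
  (Algebra.TensorProduct.lid ℂ H).toAlgHom.comp
    (Algebra.TensorProduct.map (Bialgebra.counitAlgHom ℂ H) (AlgHom.id ℂ H))

/-- `(id ⊗ ε) : H ⊗ H → H`. -/
def idEps : H ⊗[ℂ] H →ₐ[ℂ] H :=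
  (Algebra.TensorProduct.rid ℂ ℂ H).toAlgHom.comp
    (Algebra.TensorProduct.map (AlgHom.id ℂ H) (Bialgebra.counitAlgHom ℂ H))

/-- `x¹(λ - h⁽²⁾) = ∑_μ x(λ-μ) ⊗ P_μ`. -/
def x1shift (A : Subgroup Hˣ) [Fintype A] [Fintype (DChar A)]
    (x : DChar A → H) (lam : DChar A) : H ⊗[ℂ] H :=
  ∑ μ : DChar A, x (lam - μ) ⊗ₜ[ℂ] dP A μ

/-- A dynamical twist `J : A* → H ⊗ H`: a zero weight invertible-valued function satisfying
`J^{12,3}(λ) J^{12}(λ-h⁽³⁾) = J^{1,23}(λ) J^{23}(λ)` and `(ε⊗id)J = (id⊗ε)J = 1`. -/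
def IsDynamicalTwist (A : Subgroup Hˣ) [Fintype A] [Fintype (DChar A)]
    (J : DChar A → H ⊗[ℂ] H) : Prop :=
  (∀ lam, ZeroWeight₂ A (J lam)) ∧
  (∀ lam, IsUnit (J lam)) ∧
  (∀ lam : DChar A,
    J12_3 (J lam) * (∑ μ : DChar A, J (lam - μ) ⊗ₜ[ℂ] dP A μ)
      = J1_23 (J lam)
        * ((Algebra.TensorProduct.assoc ℂ ℂ ℂ H H H).symm ((1 : H) ⊗ₜ[ℂ] J lam))) ∧
  (∀ lam, epsId (J lam) = 1 ∧ idEps (J lam) = 1)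

/-- Restriction `λ ↦ λ̄` of a character of `A` to a subgroup `B ≤ A`. -/
def resChar {B A : Subgroup Hˣ} (hBA : B ≤ A) (lam : DChar A) : DChar B :=
  Additive.ofMul ((Additive.toMul lam).comp (Subgroup.inclusion hBA))

namespace VIRF
open scoped Classical
set_option linter.unusedSectionVars false

lemma charSum_eq_zero {G : Type*} [Group G] [Fintype G] {χ : G →* ℂˣ} (hχ : χ ≠ 1) :
    ∑ a : G, ((χ a : ℂˣ) : ℂ) = 0 := by
  obtain ⟨b, hb⟩ : ∃ b, χ b ≠ 1 := by
    by_contra hc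
    push_neg at hc
    exact hχ (MonoidHom.ext fun a => hc a)
  have key : ((χ b : ℂˣ) : ℂ) * ∑ a : G, ((χ a : ℂˣ) : ℂ) = ∑ a : G, ((χ a : ℂˣ) : ℂ) := by
    rw [Finset.mul_sum]
    exact Fintype.sum_bijective (fun a => b * a) (Group.mulLeft_bijective b) _ _
      (fun a => by rw [map_mul, Units.val_mul])
  have hb' : ((χ b : ℂˣ) : ℂ) ≠ 1 := fun hh => hb (Units.ext hh)
  have h2 : (((χ b : ℂˣ) : ℂ) - 1) * ∑ a : G, ((χ a : ℂˣ) : ℂ) = 0 := by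
    rw [sub_mul, one_mul, key, sub_self]
  rcases mul_eq_zero.mp h2 with h | h
  · exact absurd (sub_eq_zero.mp h) hb'
  · exact h

lemma charSum_eq {G : Type*} [Group G] [Fintype G] (χ : G →* ℂˣ) :
    ∑ a : G, ((χ a : ℂˣ) : ℂ) = if χ = 1 then (Fintype.card G : ℂ) else 0 := by
  split_ifs with h
  · subst h
    simp only [MonoidHom.one_apply, Units.val_one]
    rw [Finset.sum_const, Finset.card_univ, nsmul_eq_mul, mul_one]
  · exact charSum_eq_zero h


example (A : Subgroup Hˣ) (μ ν : DChar A) :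
    ((Additive.toMul μ)⁻¹ * Additive.toMul ν = 1) ↔ μ = ν := by
  constructor
  · intro hc
    exact Additive.toMul.injective (inv_mul_eq_one.mp hc)
  · rintro rfl
    exact inv_mul_cancel (Additive.toMul μ)

lemma coe_mul' (A : Subgroup Hˣ) (a b : ↥A) :
    (((a * b : ↥A) : Hˣ) : H) = ((a : Hˣ) : H) * ((b : Hˣ) : H) := by
  rw [Subgroup.coe_mul, Units.val_mul]

lemma coe_mul_dP (A : Subgroup Hˣ) [Fintype A] (μ : DChar A) (b : ↥A) :
    ((b : Hˣ) : H) * dP A μ = ((Additive.toMul μ b : ℂˣ) : ℂ) • dP A μ := by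
  simp only [dP]
  conv_lhs => rw [mul_smul_comm, Finset.mul_sum]
  conv_rhs => rw [smul_comm, Finset.smul_sum]
  congr 1
  apply Fintype.sum_bijective (fun a => b * a) (Group.mulLeft_bijective b)
  intro a
  rw [mul_smul_comm, ← coe_mul' A b a]
  simp only [smul_smul]
  congr 1
  have h : (Additive.toMul μ a)⁻¹ = Additive.toMul μ b * (Additive.toMul μ (b * a))⁻¹ := by
    rw [map_mul, mul_inv_rev, mul_comm ((Additive.toMul μ a)⁻¹) ((Additive.toMul μ b)⁻¹),
      mul_inv_cancel_left]
  rw [h, Units.val_mul]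

lemma dP_mul_coe (A : Subgroup Hˣ) [Fintype A] (μ : DChar A) (b : ↥A) :
    dP A μ * ((b : Hˣ) : H) = ((Additive.toMul μ b : ℂˣ) : ℂ) • dP A μ := by
  simp only [dP]
  conv_lhs => rw [smul_mul_assoc, Finset.sum_mul]
  conv_rhs => rw [smul_comm, Finset.smul_sum]
  congr 1
  apply Fintype.sum_bijective (fun a => a * b) (Group.mulRight_bijective b)
  intro a
  rw [smul_mul_assoc, ← coe_mul' A a b]
  simp only [smul_smul]
  congr 1
  have h : (Additive.toMul μ a)⁻¹ = Additive.toMul μ b * (Additive.toMul μ (a * b))⁻¹ := by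
    rw [map_mul, mul_inv_rev, mul_inv_cancel_left]
  rw [h, Units.val_mul]

lemma dP_mul (A : Subgroup Hˣ) [Fintype A] (μ ν : DChar A) :
    dP A μ * dP A ν = if μ = ν then dP A μ else 0 := by
  have hcard : (Fintype.card ↥A : ℂ) ≠ 0 := Nat.cast_ne_zero.mpr Fintype.card_ne_zero
  have hterm : ∀ a : ↥A, ((((Additive.toMul μ) a)⁻¹ : ℂˣ) : ℂ) • ((a : Hˣ) : H) * dP A ν
      = (((((Additive.toMul μ)⁻¹ * Additive.toMul ν) a) : ℂˣ) : ℂ) • dP A ν := by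
    intro a
    rw [smul_mul_assoc, coe_mul_dP, smul_smul, MonoidHom.mul_apply, MonoidHom.inv_apply,
      Units.val_mul]
  have expand : dP A μ * dP A ν
      = ((Fintype.card ↥A : ℂ)⁻¹
          * ∑ a : ↥A, ((((Additive.toMul μ)⁻¹ * Additive.toMul ν) a : ℂˣ) : ℂ)) • dP A ν := by
    conv_lhs => rw [dP.eq_def, smul_mul_assoc, Finset.sum_mul,
      Finset.sum_congr rfl fun a _ => hterm a]
    rw [← Finset.sum_smul, smul_smul]
  have hcond : ((Additive.toMul μ)⁻¹ * Additive.toMul ν = 1) ↔ μ = ν := by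
    constructor
    · intro hc
      exact Additive.toMul.injective (inv_mul_eq_one.mp hc)
    · rintro rfl
      exact inv_mul_cancel (Additive.toMul μ)
  rw [expand, charSum_eq]
  by_cases h : μ = ν
  · subst h
    rw [if_pos rfl, if_pos (hcond.mpr rfl), inv_mul_cancel₀ hcard, one_smul]
  · rw [if_neg h, if_neg (fun hc => h (hcond.mp hc)), mul_zero, zero_smul]

lemma coe_one' (A : Subgroup Hˣ) : (((1 : ↥A) : Hˣ) : H) = 1 := by
  rw [OneMemClass.coe_one, Units.val_one]

lemma dualCharSum_eq {G : Type*} [CommGroup G] [Fintype G] [Fintype (G →* ℂˣ)] (a : G) :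
    ∑ χ : G →* ℂˣ, ((χ a : ℂˣ) : ℂ) = if a = 1 then (Fintype.card G : ℂ) else 0 := by
  haveI : NeZero ((Monoid.exponent G : ℕ) : ℂ) :=
    ⟨Nat.cast_ne_zero.mpr Monoid.exponent_ne_zero_of_finite⟩
  split_ifs with h
  · subst h
    obtain ⟨e⟩ := CommGroup.monoidHom_mulEquiv_of_hasEnoughRootsOfUnity G ℂ
    simp only [map_one, Units.val_one]
    rw [Finset.sum_const, Finset.card_univ, nsmul_eq_mul, mul_one,
      Fintype.card_congr e.toEquiv]
  · obtain ⟨φ, hφ⟩ := CommGroup.exists_apply_ne_one_of_hasEnoughRootsOfUnity G ℂ h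
    have hev : (⟨⟨fun χ : G →* ℂˣ => χ a, rfl⟩, fun χ ψ => rfl⟩ : (G →* ℂˣ) →* ℂˣ) ≠ 1 := by
      intro hc
      apply hφ
      simpa using DFunLike.congr_fun hc φ
    simpa using charSum_eq_zero hev

lemma dP_sum (A : Subgroup Hˣ) [Fintype A] [Fintype (DChar A)]
    (hab : ∀ a b : ↥A, a * b = b * a) :
    ∑ μ : DChar A, dP A μ = 1 := by
  letI : CommGroup ↥A := { (inferInstance : Group ↥A) with mul_comm := hab }
  haveI : Fintype (↥A →* ℂˣ) := Fintype.ofEquiv (DChar A) Additive.toMul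
  have hcard : (Fintype.card ↥A : ℂ) ≠ 0 := Nat.cast_ne_zero.mpr Fintype.card_ne_zero
  have h1 : ∑ μ : DChar A, dP A μ
      = (Fintype.card ↥A : ℂ)⁻¹ • ∑ a : ↥A,
          (∑ μ : DChar A, (((Additive.toMul μ a)⁻¹ : ℂˣ) : ℂ)) • ((a : Hˣ) : H) := by
    simp only [dP]
    rw [← Finset.smul_sum, Finset.sum_comm]
    congr 1
    refine Finset.sum_congr rfl fun a _ => ?_
    rw [Finset.sum_smul]
  have h2 : ∀ a : ↥A, (∑ μ : DChar A, (((Additive.toMul μ a)⁻¹ : ℂˣ) : ℂ))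
      = if a = 1 then (Fintype.card ↥A : ℂ) else 0 := by
    intro a
    refine (Fintype.sum_equiv ((Additive.toMul (α := ↥A →* ℂˣ)).trans (Equiv.inv _)) _
      (fun χ => ((χ a : ℂˣ) : ℂ)) fun μ => ?_).trans ?_
    · simp [MonoidHom.inv_apply]
    · convert dualCharSum_eq a using 2
  rw [h1, Finset.sum_congr rfl fun a _ => by rw [h2 a]]
  simp only [ite_smul, zero_smul]
  rw [Finset.sum_ite_eq' Finset.univ (1 : ↥A), if_pos (Finset.mem_univ _), coe_one' A,
    smul_smul, inv_mul_cancel₀ hcard, one_smul]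

lemma dP_counit (A : Subgroup Hˣ) [Fintype A]
    (hgl : ∀ a : ↥A, IsGroupLike ((a : Hˣ) : H)) (μ : DChar A) :
    Coalgebra.counit (R := ℂ) (dP A μ) = if μ = 0 then 1 else 0 := by
  have hcard : (Fintype.card ↥A : ℂ) ≠ 0 := Nat.cast_ne_zero.mpr Fintype.card_ne_zero
  have h1 : Coalgebra.counit (R := ℂ) (dP A μ)
      = (Fintype.card ↥A : ℂ)⁻¹ * ∑ a : ↥A, ((((Additive.toMul μ)⁻¹) a : ℂˣ) : ℂ) := by
    simp only [dP]
    rw [map_smul, map_sum, smul_eq_mul]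
    congr 1
    refine Finset.sum_congr rfl fun a _ => ?_
    rw [map_smul, (hgl a).2, smul_eq_mul, mul_one, MonoidHom.inv_apply]
  rw [h1, charSum_eq]
  have hcond : ((Additive.toMul μ)⁻¹ = 1) ↔ μ = 0 := by
    constructor
    · intro hc
      exact (inv_eq_one (a := Additive.toMul μ)).mp hc
    · rintro rfl
      exact (inv_eq_one (a := Additive.toMul (0 : DChar A))).mpr rfl
  by_cases h : μ = 0
  · rw [if_pos (hcond.mpr h), if_pos h, inv_mul_cancel₀ hcard]
  · rw [if_neg (fun hc => h (hcond.mp hc)), if_neg h, mul_zero]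

lemma dP_bridge {A B : Subgroup Hˣ} [Fintype A] [Fintype B] (hBA : B ≤ A)
    (ν : DChar B) (μ : DChar A) :
    dP B ν * dP A μ = if ν = resChar hBA μ then dP A μ else 0 := by
  have hcard : (Fintype.card ↥B : ℂ) ≠ 0 := Nat.cast_ne_zero.mpr Fintype.card_ne_zero
  have hcoe : ∀ b : ↥B, ((b : Hˣ) : H) = ((Subgroup.inclusion hBA b : Hˣ) : H) := by
    intro b; rw [Subgroup.coe_inclusion]
  have hterm : ∀ b : ↥B, ((((Additive.toMul ν) b)⁻¹ : ℂˣ) : ℂ) • ((b : Hˣ) : H) * dP A μ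
      = (((((Additive.toMul ν)⁻¹ * Additive.toMul (resChar hBA μ)) b) : ℂˣ) : ℂ) • dP A μ := by
    intro b
    rw [smul_mul_assoc, hcoe b, coe_mul_dP, smul_smul, MonoidHom.mul_apply, MonoidHom.inv_apply,
      Units.val_mul]
    rfl
  have expand : dP B ν * dP A μ
      = ((Fintype.card ↥B : ℂ)⁻¹ * ∑ b : ↥B,
          ((((Additive.toMul ν)⁻¹ * Additive.toMul (resChar hBA μ)) b : ℂˣ) : ℂ)) • dP A μ := by
    conv_lhs => rw [dP.eq_def, smul_mul_assoc, Finset.sum_mul,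
      Finset.sum_congr rfl fun b _ => hterm b]
    rw [← Finset.sum_smul, smul_smul]
  have hcond : ((Additive.toMul ν)⁻¹ * Additive.toMul (resChar hBA μ) = 1)
      ↔ ν = resChar hBA μ := by
    constructor
    · intro hc
      exact Additive.toMul.injective (inv_mul_eq_one.mp hc)
    · rintro rfl
      exact inv_mul_cancel (Additive.toMul (resChar hBA μ))
  rw [expand, charSum_eq]
  by_cases h : ν = resChar hBA μ
  · rw [if_pos (hcond.mpr h), if_pos h, inv_mul_cancel₀ hcard, one_smul]
  · rw [if_neg (fun hc => h (hcond.mp hc)), if_neg h, mul_zero, zero_smul]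

lemma coe_expand (A : Subgroup Hˣ) [Fintype A] [Fintype (DChar A)]
    (hab : ∀ a b : ↥A, a * b = b * a) (a : ↥A) :
    ((a : Hˣ) : H) = ∑ ρ : DChar A, ((Additive.toMul ρ a : ℂˣ) : ℂ) • dP A ρ := by
  conv_lhs => rw [← one_mul ((a : Hˣ) : H), ← dP_sum A hab, Finset.sum_mul]
  exact Finset.sum_congr rfl fun ρ _ => dP_mul_coe A ρ a

lemma dP_comul (A : Subgroup Hˣ) [Fintype A] [Fintype (DChar A)]
    (hgl : ∀ a : ↥A, IsGroupLike ((a : Hˣ) : H))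
    (hab : ∀ a b : ↥A, a * b = b * a) (μ : DChar A) :
    Coalgebra.comul (R := ℂ) (dP A μ) = ∑ ν : DChar A, dP A (μ - ν) ⊗ₜ[ℂ] dP A ν := by
  have hcard : (Fintype.card ↥A : ℂ) ≠ 0 := Nat.cast_ne_zero.mpr Fintype.card_ne_zero
  have hL : Coalgebra.comul (R := ℂ) (dP A μ)
      = ∑ a : ↥A, ((Fintype.card ↥A : ℂ)⁻¹ * (((Additive.toMul μ a)⁻¹ : ℂˣ) : ℂ))
          • (((a : Hˣ) : H) ⊗ₜ[ℂ] ((a : Hˣ) : H)) := by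
    simp only [dP]
    rw [map_smul, map_sum, Finset.smul_sum]
    refine Finset.sum_congr rfl fun a _ => ?_
    rw [map_smul, (hgl a).1, smul_smul]
  have hE : ∀ a : ↥A, ((a : Hˣ) : H) ⊗ₜ[ℂ] ((a : Hˣ) : H)
      = ∑ ρ : DChar A, ∑ ν : DChar A,
          (((Additive.toMul ρ a : ℂˣ) : ℂ) * ((Additive.toMul ν a : ℂˣ) : ℂ))
            • (dP A ρ ⊗ₜ[ℂ] dP A ν) := by
    intro a
    conv_lhs => rw [coe_expand A hab a]
    rw [TensorProduct.sum_tmul]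
    refine Finset.sum_congr rfl fun ρ _ => ?_
    rw [TensorProduct.tmul_sum]
    refine Finset.sum_congr rfl fun ν _ => ?_
    rw [← TensorProduct.smul_tmul', TensorProduct.tmul_smul, smul_smul]
  rw [hL, Finset.sum_congr rfl fun a _ => by rw [hE a]]
  simp only [Finset.smul_sum, smul_smul]
  rw [Finset.sum_congr rfl fun a _ => Finset.sum_comm, Finset.sum_comm]
  refine Finset.sum_congr rfl fun ν _ => ?_
  rw [Finset.sum_comm]
  have hsc : ∀ ρ : DChar A, (∑ a : ↥A, ((Fintype.card ↥A : ℂ)⁻¹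
        * (((Additive.toMul μ a)⁻¹ : ℂˣ) : ℂ)
        * (((Additive.toMul ρ a : ℂˣ) : ℂ) * ((Additive.toMul ν a : ℂˣ) : ℂ))))
      = if ρ = μ - ν then 1 else 0 := by
    intro ρ
    have h1 : ∀ a : ↥A, ((Fintype.card ↥A : ℂ)⁻¹ * (((Additive.toMul μ a)⁻¹ : ℂˣ) : ℂ)
          * (((Additive.toMul ρ a : ℂˣ) : ℂ) * ((Additive.toMul ν a : ℂˣ) : ℂ)))
        = (Fintype.card ↥A : ℂ)⁻¹
          * ((((Additive.toMul μ)⁻¹ * Additive.toMul ρ * Additive.toMul ν) a : ℂˣ) : ℂ) := by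
      intro a
      rw [MonoidHom.mul_apply, MonoidHom.mul_apply, MonoidHom.inv_apply, Units.val_mul,
        Units.val_mul]
      ring
    rw [Finset.sum_congr rfl fun a _ => h1 a, ← Finset.mul_sum, charSum_eq]
    have heq : (Additive.toMul μ)⁻¹ * Additive.toMul ρ * Additive.toMul ν
        = (Additive.toMul (μ - ν))⁻¹ * Additive.toMul ρ := by
      refine MonoidHom.ext fun a => ?_
      simp only [MonoidHom.mul_apply, MonoidHom.inv_apply]
      have e1 : Additive.toMul (μ - ν) a = Additive.toMul μ a / Additive.toMul ν a := rfl
      rw [e1, div_eq_mul_inv, mul_inv_rev, inv_inv]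
      exact (mul_rotate ((Additive.toMul ν) a) ((Additive.toMul μ) a)⁻¹ ((Additive.toMul ρ) a)).symm
    have hcnd : ((Additive.toMul μ)⁻¹ * Additive.toMul ρ * Additive.toMul ν = 1)
        ↔ ρ = μ - ν := by
      rw [heq]
      constructor
      · intro hc
        exact (Additive.toMul.injective (inv_mul_eq_one.mp hc)).symm
      · rintro rfl
        exact inv_mul_cancel (Additive.toMul (μ - ν))
    by_cases h : ρ = μ - ν
    · rw [if_pos (hcnd.mpr h), if_pos h, inv_mul_cancel₀ hcard]
    · rw [if_neg (fun hc => h (hcnd.mp hc)), if_neg h, mul_zero]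
  rw [Finset.sum_congr rfl fun ρ _ => by rw [← Finset.sum_smul, hsc ρ]]
  simp only [ite_smul, zero_smul, one_smul]
  rw [Finset.sum_ite_eq' Finset.univ (μ - ν), if_pos (Finset.mem_univ _)]

lemma zw1_mul_dP {A : Subgroup Hˣ} [Fintype A] {v : H} (hv : ZeroWeight₁ A v) (μ : DChar A) :
    v * dP A μ = dP A μ * v := by
  simp only [dP]
  rw [mul_smul_comm, smul_mul_assoc, Finset.mul_sum, Finset.sum_mul]
  congr 1
  refine Finset.sum_congr rfl fun a _ => ?_
  rw [mul_smul_comm, smul_mul_assoc, hv a]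

lemma zw2_mul_comul_dP {A : Subgroup Hˣ} [Fintype A] {v : H ⊗[ℂ] H}
    (hv : ZeroWeight₂ A v) (hgl : ∀ a : ↥A, IsGroupLike ((a : Hˣ) : H)) (μ : DChar A) :
    v * Coalgebra.comul (R := ℂ) (dP A μ) = Coalgebra.comul (R := ℂ) (dP A μ) * v := by
  have hexp : Coalgebra.comul (R := ℂ) (dP A μ)
      = (Fintype.card ↥A : ℂ)⁻¹ • ∑ a : ↥A, ((((Additive.toMul μ) a)⁻¹ : ℂˣ) : ℂ)
          • (((a : Hˣ) : H) ⊗ₜ[ℂ] ((a : Hˣ) : H)) := by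
    simp only [dP]
    rw [map_smul, map_sum]
    congr 1
    refine Finset.sum_congr rfl fun a _ => ?_
    rw [map_smul, (hgl a).1]
  rw [hexp, mul_smul_comm, smul_mul_assoc, Finset.mul_sum, Finset.sum_mul]
  congr 1
  refine Finset.sum_congr rfl fun a _ => ?_
  rw [mul_smul_comm, smul_mul_assoc, hv a]

lemma resChar_sub {A B : Subgroup Hˣ} (hBA : B ≤ A) (lam μ : DChar A) :
    resChar hBA (lam - μ) = resChar hBA lam - resChar hBA μ := by
  unfold resChar
  rw [toMul_sub, MonoidHom.div_comp, ofMul_div]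

/-! ### Shift sums -/

def shP (A : Subgroup Hˣ) [Fintype A] [Fintype (DChar A)] {R : Type*} [Ring R] [Algebra ℂ R]
    (F : DChar A → R) (lam : DChar A) : R ⊗[ℂ] H :=
  ∑ μ : DChar A, F (lam - μ) ⊗ₜ[ℂ] dP A μ

lemma shP_mul (A : Subgroup Hˣ) [Fintype A] [Fintype (DChar A)] {R : Type*} [Ring R]
    [Algebra ℂ R] (F G : DChar A → R) (lam : DChar A) :
    shP A (fun ν => F ν * G ν) lam = shP A F lam * shP A G lam := by
  rw [shP, shP, shP, Finset.sum_mul_sum]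
  symm
  refine Finset.sum_congr rfl fun μ _ => ?_
  have key : ∀ ν : DChar A, (F (lam - μ) ⊗ₜ[ℂ] dP A μ) * (G (lam - ν) ⊗ₜ[ℂ] dP A ν)
      = if μ = ν then (F (lam - μ) * G (lam - μ)) ⊗ₜ[ℂ] dP A μ else 0 := by
    intro ν
    rw [Algebra.TensorProduct.tmul_mul_tmul, dP_mul]
    split_ifs with h
    · subst h; rfl
    · rw [TensorProduct.tmul_zero]
  rw [Finset.sum_congr rfl fun ν _ => key ν, Finset.sum_ite_eq, if_pos (Finset.mem_univ μ)]

lemma shP_one (A : Subgroup Hˣ) [Fintype A] [Fintype (DChar A)] {R : Type*} [Ring R]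
    [Algebra ℂ R] (hab : ∀ a b : ↥A, a * b = b * a) (lam : DChar A) :
    shP A (fun _ => (1 : R)) lam = 1 := by
  rw [shP, ← TensorProduct.tmul_sum, dP_sum A hab, Algebra.TensorProduct.one_def]

lemma shP_inverse (A : Subgroup Hˣ) [Fintype A] [Fintype (DChar A)] {R : Type*} [Ring R]
    [Algebra ℂ R] (hab : ∀ a b : ↥A, a * b = b * a) {F : DChar A → R}
    (hF : ∀ ν, IsUnit (F ν)) (lam : DChar A) :
    IsUnit (shP A F lam)
      ∧ Ring.inverse (shP A F lam) = shP A (fun ν => Ring.inverse (F ν)) lam := by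
  have h1 : shP A F lam * shP A (fun ν => Ring.inverse (F ν)) lam = 1 := by
    rw [← shP_mul]
    have he : (fun ν : DChar A => F ν * Ring.inverse (F ν)) = fun _ : DChar A => (1 : R) :=
      funext fun ν => Ring.mul_inverse_cancel _ (hF ν)
    rw [he, shP_one A hab]
  have h2 : shP A (fun ν => Ring.inverse (F ν)) lam * shP A F lam = 1 := by
    rw [← shP_mul]
    have he : (fun ν : DChar A => Ring.inverse (F ν) * F ν) = fun _ : DChar A => (1 : R) :=
      funext fun ν => Ring.inverse_mul_cancel _ (hF ν)
    rw [he, shP_one A hab]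
  let u : (R ⊗[ℂ] H)ˣ := ⟨shP A F lam, shP A (fun ν => Ring.inverse (F ν)) lam, h1, h2⟩
  exact ⟨u.isUnit, Ring.inverse_unit u⟩

lemma shP_res {A B : Subgroup Hˣ} [Fintype A] [Fintype B] [Fintype (DChar A)]
    [Fintype (DChar B)] (hBA : B ≤ A) (hab : ∀ a b : ↥A, a * b = b * a)
    {R : Type*} [Ring R] [Algebra ℂ R] (F : DChar B → R) (lam : DChar A) :
    shP A (fun ν => F (resChar hBA ν)) lam = shP B F (resChar hBA lam) := by
  symm
  rw [shP, shP]
  have key : ∀ ν : DChar B, F (resChar hBA lam - ν) ⊗ₜ[ℂ] dP B ν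
      = ∑ μ : DChar A, if ν = resChar hBA μ
          then F (resChar hBA lam - ν) ⊗ₜ[ℂ] dP A μ else 0 := by
    intro ν
    have h0 : dP B ν = dP B ν * ∑ μ : DChar A, dP A μ := by rw [dP_sum A hab, mul_one]
    rw [h0, Finset.mul_sum, TensorProduct.tmul_sum]
    refine Finset.sum_congr rfl fun μ _ => ?_
    rw [dP_bridge hBA]
    split_ifs with h
    · rfl
    · rw [TensorProduct.tmul_zero]
  rw [Finset.sum_congr rfl fun ν _ => key ν, Finset.sum_comm]
  refine Finset.sum_congr rfl fun μ _ => ?_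
  rw [Finset.sum_ite_eq' Finset.univ (resChar hBA μ), if_pos (Finset.mem_univ _), resChar_sub]

/-! ### Ring.inverse helpers -/

lemma algHom_inverse {R S : Type*} [Ring R] [Ring S] [Algebra ℂ R] [Algebra ℂ S]
    (f : R →ₐ[ℂ] S) {a : R} (h : IsUnit a) :
    f (Ring.inverse a) = Ring.inverse (f a) := by
  obtain ⟨u, rfl⟩ := h
  rw [Ring.inverse_unit]
  calc f ↑u⁻¹ = ↑(Units.map (f : R →* S) u⁻¹) := (Units.coe_map (f : R →* S) u⁻¹).symm
    _ = ↑((Units.map (f : R →* S) u)⁻¹) := by rw [map_inv]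
    _ = Ring.inverse ↑(Units.map (f : R →* S) u) := (Ring.inverse_unit _).symm
    _ = Ring.inverse ((f : R →* S) ↑u) := by rw [Units.coe_map]
    _ = Ring.inverse (f ↑u) := rfl

lemma inverse_commute {R : Type*} [Ring R] {a b : R} (h : IsUnit a) (hc : a * b = b * a) :
    Ring.inverse a * b = b * Ring.inverse a := by
  obtain ⟨u, rfl⟩ := h
  rw [Ring.inverse_unit]
  exact Commute.units_inv_left hc

/-! ### Counit and coassociativity -/

lemma epsId_tmul (y z : H) :
    epsId (y ⊗ₜ[ℂ] z) = Coalgebra.counit (R := ℂ) y • z := by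
  simp [epsId, Bialgebra.counitAlgHom_apply]

lemma idEps_tmul (y z : H) :
    idEps (y ⊗ₜ[ℂ] z) = Coalgebra.counit (R := ℂ) z • y := by
  simp [idEps, Bialgebra.counitAlgHom_apply]

lemma epsId_comul (h : H) : epsId (Bialgebra.comulAlgHom ℂ H h) = h := by
  have key : ∀ z : H ⊗[ℂ] H,
      epsId z = TensorProduct.lid ℂ H
        ((LinearMap.rTensor H (Coalgebra.counit (R := ℂ) (A := H))) z) := by
    intro z
    induction z using TensorProduct.induction_on with
    | zero => simp
    | tmul a b => rw [LinearMap.rTensor_tmul, TensorProduct.lid_tmul, epsId_tmul]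
    | add u v hu hv => rw [map_add, map_add, map_add, hu, hv]
  rw [Bialgebra.comulAlgHom_apply, key, ← LinearMap.comp_apply,
    Coalgebra.rTensor_counit_comp_comul]
  simp

lemma idEps_comul (h : H) : idEps (Bialgebra.comulAlgHom ℂ H h) = h := by
  have key : ∀ z : H ⊗[ℂ] H,
      idEps z = TensorProduct.rid ℂ H
        ((LinearMap.lTensor H (Coalgebra.counit (R := ℂ) (A := H))) z) := by
    intro z
    induction z using TensorProduct.induction_on with
    | zero => simp
    | tmul a b => rw [LinearMap.lTensor_tmul, TensorProduct.rid_tmul, idEps_tmul]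
    | add u v hu hv => rw [map_add, map_add, map_add, hu, hv]
  rw [Bialgebra.comulAlgHom_apply, key, ← LinearMap.comp_apply,
    Coalgebra.lTensor_counit_comp_comul]
  simp

lemma assoc_symm_eq (z : H ⊗[ℂ] (H ⊗[ℂ] H)) :
    (Algebra.TensorProduct.assoc ℂ ℂ ℂ H H H).symm z = (TensorProduct.assoc ℂ H H H).symm z := by
  induction z using TensorProduct.induction_on with
  | zero => rw [map_zero, LinearEquiv.map_zero]
  | tmul a w =>
    induction w using TensorProduct.induction_on with
    | zero => rw [TensorProduct.tmul_zero, map_zero, LinearEquiv.map_zero]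
    | tmul b c => rw [Algebra.TensorProduct.assoc_symm_tmul, TensorProduct.assoc_symm_tmul]
    | add u v hu hv => rw [TensorProduct.tmul_add, map_add, map_add, hu, hv]
  | add u v hu hv => rw [map_add, map_add, hu, hv]

lemma J12_3_tmul (y z : H) :
    J12_3 (y ⊗ₜ[ℂ] z) = (Bialgebra.comulAlgHom ℂ H y : H ⊗[ℂ] H) ⊗ₜ[ℂ] z := by
  simp [J12_3]

lemma J1_23_tmul (y z : H) :
    J1_23 (y ⊗ₜ[ℂ] z)
      = (Algebra.TensorProduct.assoc ℂ ℂ ℂ H H H).symm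
          (y ⊗ₜ[ℂ] (Bialgebra.comulAlgHom ℂ H z : H ⊗[ℂ] H)) := by
  simp [J1_23]

lemma coassoc' (h : H) :
    J12_3 (Bialgebra.comulAlgHom ℂ H h) = J1_23 (Bialgebra.comulAlgHom ℂ H h) := by
  have k1 : ∀ z : H ⊗[ℂ] H,
      J12_3 z = LinearMap.rTensor H (Coalgebra.comul (R := ℂ) (A := H)) z := by
    intro z
    induction z using TensorProduct.induction_on with
    | zero => simp
    | tmul a b => rw [LinearMap.rTensor_tmul, J12_3_tmul, Bialgebra.comulAlgHom_apply]
    | add u v hu hv => rw [map_add, map_add, hu, hv]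
  have k2 : ∀ z : H ⊗[ℂ] H,
      J1_23 z = (TensorProduct.assoc ℂ H H H).symm
        (LinearMap.lTensor H (Coalgebra.comul (R := ℂ) (A := H)) z) := by
    intro z
    induction z using TensorProduct.induction_on with
    | zero => rw [map_zero, map_zero, LinearEquiv.map_zero]
    | tmul a b =>
      rw [LinearMap.lTensor_tmul, J1_23_tmul, ← assoc_symm_eq, Bialgebra.comulAlgHom_apply]
    | add u v hu hv => rw [map_add, hu, hv, map_add, map_add]
  rw [Bialgebra.comulAlgHom_apply, k1, k2]
  have hco := LinearMap.congr_fun (Coalgebra.coassoc (R := ℂ) (A := H)) h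
  simp only [LinearMap.comp_apply, LinearEquiv.coe_coe] at hco
  rw [← hco, LinearEquiv.symm_apply_apply]

/-! ### The maps `M1` and `NN` -/

def NN : H ⊗[ℂ] H →ₐ[ℂ] (H ⊗[ℂ] H) ⊗[ℂ] H :=
  ((Algebra.TensorProduct.assoc ℂ ℂ ℂ H H H).symm).toAlgHom.comp Algebra.TensorProduct.includeRight

lemma NN_apply (z : H ⊗[ℂ] H) :
    NN z = (Algebra.TensorProduct.assoc ℂ ℂ ℂ H H H).symm ((1 : H) ⊗ₜ[ℂ] z) := by
  simp [NN]

def M1 : H →ₐ[ℂ] (H ⊗[ℂ] H) ⊗[ℂ] H :=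
  (Algebra.TensorProduct.includeLeft (S := ℂ)).comp (Algebra.TensorProduct.includeLeft (S := ℂ))

lemma M1_apply (h : H) : M1 h = (h ⊗ₜ[ℂ] (1 : H)) ⊗ₜ[ℂ] (1 : H) := by
  simp [M1]

lemma M1_eq (h : H) :
    M1 h = (Algebra.TensorProduct.assoc ℂ ℂ ℂ H H H).symm (h ⊗ₜ[ℂ] (1 : H ⊗[ℂ] H)) := by
  rw [M1_apply, Algebra.TensorProduct.one_def, Algebra.TensorProduct.assoc_symm_tmul]

lemma M1_mul_NN (h : H) (z : H ⊗[ℂ] H) :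
    M1 h * NN z = (Algebra.TensorProduct.assoc ℂ ℂ ℂ H H H).symm (h ⊗ₜ[ℂ] z) := by
  rw [M1_eq, NN_apply, ← map_mul, Algebra.TensorProduct.tmul_mul_tmul, mul_one, one_mul]

lemma NN_mul_M1 (h : H) (z : H ⊗[ℂ] H) :
    NN z * M1 h = (Algebra.TensorProduct.assoc ℂ ℂ ℂ H H H).symm (h ⊗ₜ[ℂ] z) := by
  rw [M1_eq, NN_apply, ← map_mul, Algebra.TensorProduct.tmul_mul_tmul, mul_one, one_mul]

end VIRF


set_option maxHeartbeats 2000000 in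
/-- **Proposition (vertex-IRF transformations).**
Let `Ā ≤ A`, let `J̄ : Ā* → H ⊗ H` be a dynamical twist for `Ā`, and let `x : A* → H` have
invertible values, zero weight w.r.t. `Ā`, and `ε(x(λ)) = 1`.  If
`J^x(λ) = Δ(x(λ)) J̄(λ̄) (x²(λ))⁻¹ (x¹(λ-h⁽²⁾))⁻¹` has zero weight w.r.t. `A`, then `J^x` is a
dynamical twist for `A`. -/
theorem vertexIRF_transform_isDynamicalTwist
    {H : Type*} [Ring H] [HopfAlgebra ℂ H]
    (A B : Subgroup Hˣ) [Fintype A] [Fintype B]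
    [Fintype (DChar A)] [Fintype (DChar B)]
    (hBA : B ≤ A)
    (hgl : ∀ a : A, IsGroupLike ((a : Hˣ) : H))
    (hab : ∀ a b : A, a * b = b * a)
    (Jbar : DChar B → H ⊗[ℂ] H)
    (hJbar : IsDynamicalTwist B Jbar)
    (x : DChar A → H)
    (hxu : ∀ lam, IsUnit (x lam))
    (hxw : ∀ lam, ZeroWeight₁ B (x lam))
    (hxe : ∀ lam, Bialgebra.counitAlgHom ℂ H (x lam) = 1)
    (Jx : DChar A → H ⊗[ℂ] H)
    (hJx : ∀ lam, Jx lam =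
      Bialgebra.comulAlgHom ℂ H (x lam) * Jbar (resChar hBA lam)
        * Ring.inverse ((1 : H) ⊗ₜ[ℂ] x lam)
        * Ring.inverse (x1shift A x lam))
    (hzw : ∀ lam, ZeroWeight₂ A (Jx lam)) :
    IsDynamicalTwist A Jx := by
  classical
  obtain ⟨hJbzw, hJbu, hJbcoc, hJbeps⟩ := hJbar
  have hDu : ∀ ν : DChar A, IsUnit (Bialgebra.comulAlgHom ℂ H (x ν) : H ⊗[ℂ] H) :=
    fun ν => (hxu ν).map _
  have hRu : ∀ ν : DChar A, IsUnit ((1 : H) ⊗ₜ[ℂ] x ν) := fun ν => by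
    have h := (hxu ν).map (Algebra.TensorProduct.includeRight (R := ℂ) (A := H) (B := H))
    rwa [Algebra.TensorProduct.includeRight_apply] at h
  have hSu : ∀ ν : DChar A, IsUnit (x1shift A x ν) := fun ν =>
    (VIRF.shP_inverse A hab (F := x) hxu ν).1
  have hJxu : ∀ lam, IsUnit (Jx lam) := fun lam => by
    rw [hJx lam]
    exact (((hDu lam).mul (hJbu _)).mul (isUnit_ringInverse.mpr (hRu lam))).mul
      (isUnit_ringInverse.mpr (hSu lam))
  refine ⟨hzw, hJxu, ?_, ?_⟩
  · -- shifted cocycle identity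
    intro lam
    -- unit facts for the pieces
    have hcU : IsUnit ((1 : H ⊗[ℂ] H) ⊗ₜ[ℂ] x lam) := by
      have h := (hxu lam).map
        (Algebra.TensorProduct.includeRight (R := ℂ) (A := H ⊗[ℂ] H) (B := H))
      rwa [Algebra.TensorProduct.includeRight_apply] at h
    have hdU : IsUnit (VIRF.shP A
        (fun ν => (Bialgebra.comulAlgHom ℂ H (x ν) : H ⊗[ℂ] H)) lam) :=
      (VIRF.shP_inverse A hab hDu lam).1
    have hfU : IsUnit (VIRF.shP A (fun ν => (1 : H) ⊗ₜ[ℂ] x ν) lam) :=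
      (VIRF.shP_inverse A hab hRu lam).1
    have hggU : IsUnit (VIRF.shP A (fun ν => x1shift A x ν) lam) :=
      (VIRF.shP_inverse A hab hSu lam).1
    have hmU : IsUnit (J1_23 ((1 : H) ⊗ₜ[ℂ] x lam)) := (hRu lam).map J1_23
    -- step A : decomposition of J12_3 (Jx lam)
    have hc1 : J12_3 ((1 : H) ⊗ₜ[ℂ] x lam) = (1 : H ⊗[ℂ] H) ⊗ₜ[ℂ] x lam := by
      rw [VIRF.J12_3_tmul, map_one]
    have hd1 : J12_3 (x1shift A x lam)
        = VIRF.shP A (fun ν => (Bialgebra.comulAlgHom ℂ H (x ν) : H ⊗[ℂ] H)) lam := by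
      simp only [x1shift]
      rw [map_sum]
      exact Finset.sum_congr rfl fun μ _ => VIRF.J12_3_tmul _ _
    have hA : J12_3 (Jx lam)
        = J12_3 (Bialgebra.comulAlgHom ℂ H (x lam)) * J12_3 (Jbar (resChar hBA lam))
          * Ring.inverse ((1 : H ⊗[ℂ] H) ⊗ₜ[ℂ] x lam)
          * Ring.inverse (VIRF.shP A
              (fun ν => (Bialgebra.comulAlgHom ℂ H (x ν) : H ⊗[ℂ] H)) lam) := by
      rw [hJx lam, map_mul, map_mul, map_mul, VIRF.algHom_inverse _ (hRu lam),
        VIRF.algHom_inverse _ (hSu lam), hc1, hd1]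
    -- step B : decomposition of the shifted factor
    have hB : (∑ μ : DChar A, Jx (lam - μ) ⊗ₜ[ℂ] dP A μ)
        = VIRF.shP A (fun ν => (Bialgebra.comulAlgHom ℂ H (x ν) : H ⊗[ℂ] H)) lam
          * VIRF.shP B Jbar (resChar hBA lam)
          * Ring.inverse (VIRF.shP A (fun ν => (1 : H) ⊗ₜ[ℂ] x ν) lam)
          * Ring.inverse (VIRF.shP A (fun ν => x1shift A x ν) lam) := by
      have h0 : (∑ μ : DChar A, Jx (lam - μ) ⊗ₜ[ℂ] dP A μ) = VIRF.shP A Jx lam := rfl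
      have h1 : VIRF.shP A Jx lam = VIRF.shP A (fun ν =>
          (Bialgebra.comulAlgHom ℂ H (x ν) : H ⊗[ℂ] H) * Jbar (resChar hBA ν)
            * Ring.inverse ((1 : H) ⊗ₜ[ℂ] x ν) * Ring.inverse (x1shift A x ν)) lam := by
        simp only [VIRF.shP]
        exact Finset.sum_congr rfl fun μ _ => by rw [hJx]
      rw [h0, h1, VIRF.shP_mul, VIRF.shP_mul, VIRF.shP_mul,
        VIRF.shP_res hBA hab Jbar lam,
        ← (VIRF.shP_inverse A hab hRu lam).2, ← (VIRF.shP_inverse A hab hSu lam).2]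
    -- commutation of x³ with the Jbar shift
    have hce : ((1 : H ⊗[ℂ] H) ⊗ₜ[ℂ] x lam) * VIRF.shP B Jbar (resChar hBA lam)
        = VIRF.shP B Jbar (resChar hBA lam) * ((1 : H ⊗[ℂ] H) ⊗ₜ[ℂ] x lam) := by
      simp only [VIRF.shP]
      rw [Finset.mul_sum, Finset.sum_mul]
      refine Finset.sum_congr rfl fun ν _ => ?_
      rw [Algebra.TensorProduct.tmul_mul_tmul, Algebra.TensorProduct.tmul_mul_tmul, one_mul,
        mul_one, VIRF.zw1_mul_dP (hxw lam)]
    -- the Jbar cocycle identity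
    have hcoc0 : J12_3 (Jbar (resChar hBA lam)) * VIRF.shP B Jbar (resChar hBA lam)
        = J1_23 (Jbar (resChar hBA lam))
          * (Algebra.TensorProduct.assoc ℂ ℂ ℂ H H H).symm
              ((1 : H) ⊗ₜ[ℂ] Jbar (resChar hBA lam)) :=
      hJbcoc (resChar hBA lam)
    -- step G : decomposition of n = assoc⁻¹ (1 ⊗ Jx lam)
    have hNm : VIRF.NN (Bialgebra.comulAlgHom ℂ H (x lam) : H ⊗[ℂ] H)
        = J1_23 ((1 : H) ⊗ₜ[ℂ] x lam) := by
      rw [VIRF.NN_apply, VIRF.J1_23_tmul]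
    have hNc : VIRF.NN ((1 : H) ⊗ₜ[ℂ] x lam) = (1 : H ⊗[ℂ] H) ⊗ₜ[ℂ] x lam := by
      rw [VIRF.NN_apply, Algebra.TensorProduct.assoc_symm_tmul, ← Algebra.TensorProduct.one_def]
    have hNf : VIRF.NN (x1shift A x lam) = VIRF.shP A (fun ν => (1 : H) ⊗ₜ[ℂ] x ν) lam := by
      simp only [x1shift]
      rw [map_sum]
      refine Finset.sum_congr rfl fun μ _ => ?_
      rw [VIRF.NN_apply, Algebra.TensorProduct.assoc_symm_tmul]
    have hG : (Algebra.TensorProduct.assoc ℂ ℂ ℂ H H H).symm ((1 : H) ⊗ₜ[ℂ] Jx lam)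
        = J1_23 ((1 : H) ⊗ₜ[ℂ] x lam)
          * VIRF.NN (Jbar (resChar hBA lam))
          * Ring.inverse ((1 : H ⊗[ℂ] H) ⊗ₜ[ℂ] x lam)
          * Ring.inverse (VIRF.shP A (fun ν => (1 : H) ⊗ₜ[ℂ] x ν) lam) := by
      rw [← VIRF.NN_apply, hJx lam, map_mul, map_mul, map_mul,
        VIRF.algHom_inverse _ (hRu lam), VIRF.algHom_inverse _ (hSu lam), hNm, hNc, hNf]
    -- the gg-form
    have hggform : VIRF.shP A (fun ν => x1shift A x ν) lam
        = ∑ σ : DChar A, VIRF.M1 (x (lam - σ))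
            * VIRF.NN (Coalgebra.comul (R := ℂ) (dP A σ)) := by
      symm
      have hterm : ∀ σ : DChar A, VIRF.M1 (x (lam - σ))
            * VIRF.NN (Coalgebra.comul (R := ℂ) (dP A σ))
          = ∑ ν : DChar A, (x (lam - σ) ⊗ₜ[ℂ] dP A (σ - ν)) ⊗ₜ[ℂ] dP A ν := by
        intro σ
        rw [VIRF.dP_comul A hgl hab, map_sum, Finset.mul_sum]
        refine Finset.sum_congr rfl fun ν _ => ?_
        rw [VIRF.NN_apply, Algebra.TensorProduct.assoc_symm_tmul, VIRF.M1_apply]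
        simp only [Algebra.TensorProduct.tmul_mul_tmul, one_mul, mul_one]
      rw [Finset.sum_congr rfl fun σ _ => hterm σ, Finset.sum_comm]
      simp only [VIRF.shP, x1shift]
      refine Finset.sum_congr rfl fun ν _ => ?_
      rw [TensorProduct.sum_tmul]
      apply Fintype.sum_bijective (fun σ => σ - ν) (Equiv.subRight ν).bijective
      intro σ
      have harg : lam - ν - (σ - ν) = lam - σ := by abel
      rw [harg]
    have hJgg : J1_23 (x1shift A x lam) = VIRF.shP A (fun ν => x1shift A x ν) lam := by
      calc J1_23 (x1shift A x lam)
          = ∑ μ : DChar A, J1_23 (x (lam - μ) ⊗ₜ[ℂ] dP A μ) := by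
            rw [show x1shift A x lam = ∑ μ : DChar A, x (lam - μ) ⊗ₜ[ℂ] dP A μ from rfl,
              map_sum]
        _ = ∑ σ : DChar A, VIRF.M1 (x (lam - σ))
              * VIRF.NN (Coalgebra.comul (R := ℂ) (dP A σ)) := by
            refine Finset.sum_congr rfl fun μ _ => ?_
            rw [VIRF.J1_23_tmul, ← VIRF.M1_mul_NN, Bialgebra.comulAlgHom_apply]
        _ = VIRF.shP A (fun ν => x1shift A x ν) lam := hggform.symm
    -- step I : decomposition of J1_23 (Jx lam)
    have hI : J1_23 (Jx lam)
        = J1_23 (Bialgebra.comulAlgHom ℂ H (x lam)) * J1_23 (Jbar (resChar hBA lam))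
          * Ring.inverse (J1_23 ((1 : H) ⊗ₜ[ℂ] x lam))
          * Ring.inverse (VIRF.shP A (fun ν => x1shift A x ν) lam) := by
      rw [hJx lam, map_mul, map_mul, map_mul, VIRF.algHom_inverse _ (hRu lam),
        VIRF.algHom_inverse _ (hSu lam), hJgg]
    -- step 7 : gg commutes with n
    have h7 : VIRF.shP A (fun ν => x1shift A x ν) lam * VIRF.NN (Jx lam)
        = VIRF.NN (Jx lam) * VIRF.shP A (fun ν => x1shift A x ν) lam := by
      rw [hggform, Finset.sum_mul, Finset.mul_sum]
      refine Finset.sum_congr rfl fun σ _ => ?_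
      calc VIRF.M1 (x (lam - σ)) * VIRF.NN (Coalgebra.comul (R := ℂ) (dP A σ))
            * VIRF.NN (Jx lam)
          = VIRF.M1 (x (lam - σ))
            * VIRF.NN (Coalgebra.comul (R := ℂ) (dP A σ) * Jx lam) := by
            rw [mul_assoc, ← map_mul]
        _ = VIRF.M1 (x (lam - σ))
            * VIRF.NN (Jx lam * Coalgebra.comul (R := ℂ) (dP A σ)) := by
            rw [← VIRF.zw2_mul_comul_dP (hzw lam) hgl σ]
        _ = VIRF.M1 (x (lam - σ)) * (VIRF.NN (Jx lam)
            * VIRF.NN (Coalgebra.comul (R := ℂ) (dP A σ))) := by rw [map_mul]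
        _ = VIRF.M1 (x (lam - σ)) * VIRF.NN (Jx lam)
            * VIRF.NN (Coalgebra.comul (R := ℂ) (dP A σ)) := by rw [mul_assoc]
        _ = VIRF.NN (Jx lam) * VIRF.M1 (x (lam - σ))
            * VIRF.NN (Coalgebra.comul (R := ℂ) (dP A σ)) := by
            rw [VIRF.M1_mul_NN, VIRF.NN_mul_M1]
        _ = VIRF.NN (Jx lam) * (VIRF.M1 (x (lam - σ))
            * VIRF.NN (Coalgebra.comul (R := ℂ) (dP A σ))) := by rw [mul_assoc]
    -- assemble
    have hd_cancel : ∀ X : (H ⊗[ℂ] H) ⊗[ℂ] H,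
        Ring.inverse (VIRF.shP A
            (fun ν => (Bialgebra.comulAlgHom ℂ H (x ν) : H ⊗[ℂ] H)) lam)
          * (VIRF.shP A (fun ν => (Bialgebra.comulAlgHom ℂ H (x ν) : H ⊗[ℂ] H)) lam * X)
        = X := fun X => by
      rw [← mul_assoc, Ring.inverse_mul_cancel _ hdU, one_mul]
    have hm_cancel : ∀ X : (H ⊗[ℂ] H) ⊗[ℂ] H,
        Ring.inverse (J1_23 ((1 : H) ⊗ₜ[ℂ] x lam)) * (J1_23 ((1 : H) ⊗ₜ[ℂ] x lam) * X)
        = X := fun X => by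
      rw [← mul_assoc, Ring.inverse_mul_cancel _ hmU, one_mul]
    have hswap_ce : ∀ X : (H ⊗[ℂ] H) ⊗[ℂ] H,
        Ring.inverse ((1 : H ⊗[ℂ] H) ⊗ₜ[ℂ] x lam)
            * (VIRF.shP B Jbar (resChar hBA lam) * X)
        = VIRF.shP B Jbar (resChar hBA lam)
            * (Ring.inverse ((1 : H ⊗[ℂ] H) ⊗ₜ[ℂ] x lam) * X) := fun X => by
      rw [← mul_assoc, VIRF.inverse_commute hcU hce, mul_assoc]
    have hswap_coc : ∀ X : (H ⊗[ℂ] H) ⊗[ℂ] H,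
        J12_3 (Jbar (resChar hBA lam)) * (VIRF.shP B Jbar (resChar hBA lam) * X)
        = J1_23 (Jbar (resChar hBA lam))
            * ((Algebra.TensorProduct.assoc ℂ ℂ ℂ H H H).symm
                ((1 : H) ⊗ₜ[ℂ] Jbar (resChar hBA lam)) * X) := fun X => by
      rw [← mul_assoc, hcoc0, mul_assoc]
    have hswap_ggn : Ring.inverse (VIRF.shP A (fun ν => x1shift A x ν) lam)
          * (Algebra.TensorProduct.assoc ℂ ℂ ℂ H H H).symm ((1 : H) ⊗ₜ[ℂ] Jx lam)
        = (Algebra.TensorProduct.assoc ℂ ℂ ℂ H H H).symm ((1 : H) ⊗ₜ[ℂ] Jx lam)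
          * Ring.inverse (VIRF.shP A (fun ν => x1shift A x ν) lam) := by
      refine VIRF.inverse_commute hggU ?_
      rw [VIRF.NN_apply] at h7
      exact h7
    rw [hA, hB, hI]
    simp only [mul_assoc]
    rw [hd_cancel, hswap_ce, hswap_coc, hswap_ggn, hG]
    simp only [mul_assoc]
    rw [hm_cancel, VIRF.coassoc' (x lam)]
    -- fix the w-term : NN (Jbar l) vs assoc-symm form
    rw [VIRF.NN_apply]
  · -- counit conditions
    intro lam
    constructor
    · rw [hJx lam, map_mul, map_mul, map_mul, VIRF.algHom_inverse _ (hRu lam),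
        VIRF.algHom_inverse _ (hSu lam), VIRF.epsId_comul]
      have h1 : epsId ((1 : H) ⊗ₜ[ℂ] x lam) = x lam := by
        rw [VIRF.epsId_tmul]
        have h : Coalgebra.counit (R := ℂ) (1 : H) = 1 := map_one (Bialgebra.counitAlgHom ℂ H)
        rw [h, one_smul]
      have h2 : epsId (x1shift A x lam) = 1 := by
        simp only [x1shift]
        rw [map_sum]
        have hterm : ∀ μ : DChar A, epsId (x (lam - μ) ⊗ₜ[ℂ] dP A μ) = dP A μ := by
          intro μ
          rw [VIRF.epsId_tmul]
          have hx1 : Coalgebra.counit (R := ℂ) (x (lam - μ)) = 1 := by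
            rw [← Bialgebra.counitAlgHom_apply]
            exact hxe (lam - μ)
          rw [hx1, one_smul]
        rw [Finset.sum_congr rfl fun μ _ => hterm μ, VIRF.dP_sum A hab]
      rw [(hJbeps _).1, h1, h2, Ring.inverse_one, mul_one, mul_one,
        Ring.mul_inverse_cancel _ (hxu lam)]
    · rw [hJx lam, map_mul, map_mul, map_mul, VIRF.algHom_inverse _ (hRu lam),
        VIRF.algHom_inverse _ (hSu lam), VIRF.idEps_comul]
      have h1 : idEps ((1 : H) ⊗ₜ[ℂ] x lam) = 1 := by
        rw [VIRF.idEps_tmul]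
        have hx1 : Coalgebra.counit (R := ℂ) (x lam) = 1 := by
          rw [← Bialgebra.counitAlgHom_apply]
          exact hxe lam
        rw [hx1, one_smul]
      have h2 : idEps (x1shift A x lam) = x lam := by
        simp only [x1shift]
        rw [map_sum]
        have hterm : ∀ μ : DChar A, idEps (x (lam - μ) ⊗ₜ[ℂ] dP A μ)
            = if μ = 0 then x (lam - μ) else 0 := by
          intro μ
          rw [VIRF.idEps_tmul, VIRF.dP_counit A hgl]
          split_ifs with h
          · rw [one_smul]
          · rw [zero_smul]
        rw [Finset.sum_congr rfl fun μ _ => hterm μ,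
          Finset.sum_ite_eq' Finset.univ (0 : DChar A), if_pos (Finset.mem_univ _)]
        exact congrArg x (sub_zero lam)
      rw [(hJbeps _).2, h1, h2, Ring.inverse_one, mul_one, mul_one,
        Ring.mul_inverse_cancel _ (hxu lam)]
end
end

section
/- Let Ā be a subgroup of A, let J : A* → H⊗H be a dynamical twist for A, and let x : A* → H be a function with invertible values which has zero weight with respect to Ā and satisfies ε(x(λ)) = 1 for all λ. Define J^x : A* → H⊗H by J^x(λ) = Δ(x(λ)) · J(λ) · (x¹(λ − h^{(2)}))^{-1} · (x²(λ))^{-1}. If there exists a function J̄^x : Ā* → H⊗H such that J^x(λ) = J̄^x(λ̄) for all λ ∈ A* (where λ̄ is the restriction of λ to Ā), then J̄^x is a dynamical twist for Ā. -/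
open scoped TensorProduct

noncomputable section

variable {H : Type*} [Ring H] [HopfAlgebra ℂ H]

-- ===== auxiliary development =====
section Aux
variable {A : Subgroup Hˣ}

-- helpers
private lemma ringInverse_map {R S : Type*} [Ring R] [Ring S] (g : R →+* S) {a : R}
    (h : IsUnit a) : g (Ring.inverse a) = Ring.inverse (g a) := by
  obtain ⟨u, rfl⟩ := h
  have h1 : g ↑u = ((Units.map g.toMonoidHom u : Sˣ) : S) := (Units.coe_map _ _).symm
  rw [Ring.inverse_unit, h1, Ring.inverse_unit]
  exact (Units.coe_map_inv g.toMonoidHom u).symm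

private lemma commute_ringInverse {R : Type*} [Ring R] {a u : R} (h : IsUnit u)
    (hc : a * u = u * a) : a * Ring.inverse u = Ring.inverse u * a := by
  calc a * Ring.inverse u
      = Ring.inverse u * u * (a * Ring.inverse u) := by
        rw [Ring.inverse_mul_cancel _ h, one_mul]
    _ = Ring.inverse u * (a * u * Ring.inverse u) := by
        rw [mul_assoc, ← mul_assoc u a, ← hc]
    _ = Ring.inverse u * a := by
        rw [mul_assoc a, Ring.mul_inverse_cancel _ h, mul_one]

private lemma isUnit_ringInverse' {R : Type*} [Ring R] {u : R} (h : IsUnit u) :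
    IsUnit (Ring.inverse u) := by
  obtain ⟨v, rfl⟩ := h
  rw [Ring.inverse_unit]; exact v⁻¹.isUnit

-- character values
variable {A : Subgroup Hˣ}

private def chval (μ : DChar A) (a : ↥A) : ℂ := ((Additive.toMul μ a : ℂˣ) : ℂ)

private lemma chval_ne_zero (μ : DChar A) (a : ↥A) : chval μ a ≠ 0 :=
  Units.ne_zero _

private lemma chval_mul (μ : DChar A) (a b : ↥A) : chval μ (a * b) = chval μ a * chval μ b := by
  simp [chval]

private lemma chval_inv (μ : DChar A) (a : ↥A) : chval μ a⁻¹ = (chval μ a)⁻¹ := by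
  simp [chval]

private lemma chval_add (μ ν : DChar A) (a : ↥A) : chval (μ + ν) a = chval μ a * chval ν a := rfl

private lemma chval_zero (a : ↥A) : chval (0 : DChar A) a = 1 := rfl

private lemma chval_neg (μ : DChar A) (a : ↥A) : chval (-μ) a = (chval μ a)⁻¹ := by
  simp [chval]

private lemma chval_sub (μ ν : DChar A) (a : ↥A) :
    chval (μ - ν) a = chval μ a * (chval ν a)⁻¹ := by
  have h : μ - ν = μ + (-ν) := sub_eq_add_neg μ ν
  rw [h, chval_add, chval_neg]

private lemma chval_one (μ : DChar A) : chval μ (1 : ↥A) = 1 := by simp [chval]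

-- orthogonality I (no duality)
private lemma sum_chval_eq_zero [Fintype A] {μ : DChar A} (hμ : μ ≠ 0) :
    ∑ a : ↥A, chval μ a = 0 := by
  have : ∃ b : ↥A, Additive.toMul μ b ≠ 1 := by
    by_contra hc
    push_neg at hc
    exact hμ (Additive.toMul.injective (MonoidHom.ext hc))
  obtain ⟨b, hb⟩ := this
  have hre : ∑ a : ↥A, chval μ (b * a) = ∑ a : ↥A, chval μ a :=
    Fintype.sum_equiv (Equiv.mulLeft b) _ _ (fun a => rfl)
  have h2 : chval μ b * ∑ a : ↥A, chval μ a = ∑ a : ↥A, chval μ a := by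
    rw [Finset.mul_sum, ← hre]
    exact Finset.sum_congr rfl fun a _ => (chval_mul μ b a).symm
  have hb' : chval μ b ≠ 1 := fun hcc => hb (Units.ext hcc)
  by_contra hS
  exact hb' ((mul_left_eq_self₀.mp h2).resolve_right hS)

private lemma dual_card (G : Type*) [CommGroup G] [Finite G] :
    Nat.card (G →* ℂˣ) = Nat.card G := by
  haveI : NeZero ((Monoid.exponent G : ℂ)) :=
    ⟨Nat.cast_ne_zero.mpr Monoid.exponent_ne_zero_of_finite⟩
  exact Nat.card_congr (CommGroup.monoidHom_mulEquiv_of_hasEnoughRootsOfUnity G ℂ).some.toEquiv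

private lemma card_dchar [Fintype A] [Fintype (DChar A)] (hab : ∀ a b : ↥A, a * b = b * a) :
    Fintype.card (DChar A) = Fintype.card ↥A := by
  letI : CommGroup ↥A := { (inferInstance : Group ↥A) with mul_comm := hab }
  calc Fintype.card (DChar A) = Nat.card (DChar A) := Nat.card_eq_fintype_card.symm
    _ = Nat.card (↥A →* ℂˣ) := Nat.card_congr Additive.toMul
    _ = Nat.card ↥A := dual_card ↥A
    _ = Fintype.card ↥A := Nat.card_eq_fintype_card

open Classical in
private lemma sum_chval_char [Fintype A] [Fintype (DChar A)]
    (hab : ∀ a b : ↥A, a * b = b * a) (a : ↥A) :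
    ∑ μ : DChar A, chval μ a = if a = 1 then (Fintype.card ↥A : ℂ) else 0 := by
  by_cases ha : a = 1
  · subst ha
    simp [chval_one, card_dchar hab]
  · rw [if_neg ha]
    letI : CommGroup ↥A := { (inferInstance : Group ↥A) with mul_comm := hab }
    haveI : NeZero ((Monoid.exponent ↥A : ℂ)) :=
      ⟨Nat.cast_ne_zero.mpr Monoid.exponent_ne_zero_of_finite⟩
    obtain ⟨φ, hφ⟩ := CommGroup.exists_apply_ne_one_of_hasEnoughRootsOfUnity ↥A ℂ ha
    set μ₀ : DChar A := Additive.ofMul φ with hμ₀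
    have hre : ∑ μ : DChar A, chval (μ₀ + μ) a = ∑ μ : DChar A, chval μ a :=
      Fintype.sum_equiv (Equiv.addLeft μ₀) _ _ (fun μ => rfl)
    have h2 : chval μ₀ a * ∑ μ : DChar A, chval μ a = ∑ μ : DChar A, chval μ a := by
      rw [Finset.mul_sum, ← hre]
      exact Finset.sum_congr rfl fun μ _ => (chval_add μ₀ μ a).symm
    have hb' : chval μ₀ a ≠ 1 := fun hcc => hφ (Units.ext hcc)
    by_contra hS
    exact hb' ((mul_left_eq_self₀.mp h2).resolve_right hS)

-- ===== part 2 : dP lemmas =====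
section DPLemmas
variable [Fintype A]

private lemma dP_eq (μ : DChar A) :
    dP A μ = (Fintype.card ↥A : ℂ)⁻¹ • ∑ a : ↥A, (chval μ a)⁻¹ • ((a : Hˣ) : H) := by
  unfold dP chval
  simp [Units.val_inv_eq_inv_val]

private lemma coe_mul_dP (μ : DChar A) (a : ↥A) :
    ((a : Hˣ) : H) * dP A μ = chval μ a • dP A μ := by
  rw [dP_eq, mul_smul_comm, Finset.mul_sum, smul_comm]
  congr 1
  have h : ∀ b : ↥A, (chval μ b)⁻¹ • (((a : Hˣ) : H) * ((b : Hˣ) : H))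
      = (chval μ a * (chval μ (a * b))⁻¹) • (((a * b : ↥A) : Hˣ) : H) := by
    intro b
    rw [chval_mul, mul_inv, ← mul_assoc, mul_inv_cancel₀ (chval_ne_zero μ a), one_mul]
    norm_cast
  calc ∑ b : ↥A, ((a : Hˣ) : H) * ((chval μ b)⁻¹ • ((b : Hˣ) : H))
      = ∑ b : ↥A, (chval μ b)⁻¹ • (((a : Hˣ) : H) * ((b : Hˣ) : H)) :=
        Finset.sum_congr rfl (fun b _ => mul_smul_comm _ _ _)
    _ = ∑ c : ↥A, (chval μ a * (chval μ c)⁻¹) • ((c : Hˣ) : H) :=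
        Fintype.sum_equiv (Equiv.mulLeft a) _ _ (fun b => by simpa using h b)
    _ = chval μ a • ∑ c : ↥A, (chval μ c)⁻¹ • ((c : Hˣ) : H) := by
        rw [Finset.smul_sum]
        exact Finset.sum_congr rfl fun c _ => (smul_smul _ _ _).symm

private lemma dP_mul_coe (μ : DChar A) (a : ↥A) :
    dP A μ * ((a : Hˣ) : H) = chval μ a • dP A μ := by
  rw [dP_eq, smul_mul_assoc, Finset.sum_mul, smul_comm]
  congr 1
  have h : ∀ b : ↥A, ((chval μ b)⁻¹ • ((b : Hˣ) : H)) * ((a : Hˣ) : H)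
      = (chval μ a * (chval μ (b * a))⁻¹) • (((b * a : ↥A) : Hˣ) : H) := by
    intro b
    rw [chval_mul, mul_inv, mul_comm (chval μ a), mul_assoc, inv_mul_cancel₀ (chval_ne_zero μ a),
      mul_one, smul_mul_assoc]
    norm_cast
  calc ∑ b : ↥A, ((chval μ b)⁻¹ • ((b : Hˣ) : H)) * ((a : Hˣ) : H)
      = ∑ c : ↥A, (chval μ a * (chval μ c)⁻¹) • ((c : Hˣ) : H) :=
        Fintype.sum_equiv (Equiv.mulRight a) _ _ (fun b => by simpa using h b)
    _ = chval μ a • ∑ c : ↥A, (chval μ c)⁻¹ • ((c : Hˣ) : H) := by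
        rw [Finset.smul_sum]
        exact Finset.sum_congr rfl fun c _ => (smul_smul _ _ _).symm

private lemma card_smul_cancel {M : Type*} [AddCommMonoid M] [Module ℂ M] (m : M) :
    (Fintype.card ↥A : ℂ)⁻¹ • (Fintype.card ↥A : ℂ) • m = m := by
  rw [smul_smul, inv_mul_cancel₀, one_smul]
  exact_mod_cast Fintype.card_ne_zero

open Classical in
private lemma dP_mul_dP (μ ν : DChar A) :
    dP A μ * dP A ν = if μ = ν then dP A μ else 0 := by
  have key : dP A μ * dP A ν
      = ((Fintype.card ↥A : ℂ)⁻¹ * ∑ a : ↥A, chval (ν - μ) a) • dP A ν := by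
    rw [dP_eq μ, smul_mul_assoc, Finset.sum_mul, mul_smul]
    congr 1
    rw [Finset.sum_smul]
    apply Finset.sum_congr rfl
    intro a _
    rw [smul_mul_assoc, coe_mul_dP, smul_smul, chval_sub, mul_comm (chval ν a)]
  by_cases hμν : μ = ν
  · subst hμν
    rw [if_pos rfl, key]
    have h0 : μ - μ = (0 : DChar A) := sub_self μ
    rw [h0]
    have h1 : ∑ a : ↥A, chval (0 : DChar A) a = (Fintype.card ↥A : ℂ) := by
      simp [chval_zero]
    rw [h1, inv_mul_cancel₀ (by exact_mod_cast Fintype.card_ne_zero), one_smul]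
  · have hne : ν - μ ≠ 0 := by
      intro hc
      exact hμν (sub_eq_zero.mp hc).symm
    rw [if_neg hμν, key, sum_chval_eq_zero hne, mul_zero, zero_smul]

end DPLemmas
-- ===== part 3 =====
section Part3
variable [Fintype A] [Fintype (DChar A)]

private lemma sum_dP (hab : ∀ a b : ↥A, a * b = b * a) :
    ∑ μ : DChar A, dP A μ = 1 := by
  classical
  calc ∑ μ : DChar A, dP A μ
      = (Fintype.card ↥A : ℂ)⁻¹ • ∑ μ : DChar A, ∑ a : ↥A, (chval μ a)⁻¹ • ((a : Hˣ) : H) := by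
        rw [Finset.smul_sum]
        exact Finset.sum_congr rfl fun μ _ => dP_eq μ
    _ = (Fintype.card ↥A : ℂ)⁻¹ • ∑ a : ↥A, (∑ μ : DChar A, chval μ a⁻¹) • ((a : Hˣ) : H) := by
        rw [Finset.sum_comm]
        congr 1
        apply Finset.sum_congr rfl
        intro a _
        rw [Finset.sum_smul]
        exact Finset.sum_congr rfl fun μ _ => by rw [chval_inv]
    _ = (Fintype.card ↥A : ℂ)⁻¹ • ∑ a : ↥A,
          (if a = 1 then ((Fintype.card ↥A : ℂ) • (((a : Hˣ) : H)) ) else 0) := by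
        congr 1
        apply Finset.sum_congr rfl
        intro a _
        rw [sum_chval_char hab a⁻¹]
        by_cases ha : a = 1
        · subst ha; simp
        · rw [if_neg (fun hc => ha (inv_eq_one.mp hc)), if_neg ha, zero_smul]
    _ = 1 := by
        rw [Finset.sum_ite_eq' Finset.univ (1 : ↥A)]
        simp [card_smul_cancel]

private lemma counit_dP (hgl : ∀ a : ↥A, IsGroupLike ((a : Hˣ) : H)) (μ : DChar A) :
    Coalgebra.counit (R := ℂ) (dP A μ) = if μ = 0 then (1 : ℂ) else 0 := by
  classical
  rw [dP_eq, map_smul, map_sum]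
  have h1 : ∀ a : ↥A, Coalgebra.counit (R := ℂ) ((chval μ a)⁻¹ • ((a : Hˣ) : H))
      = chval (-μ) a := by
    intro a
    rw [map_smul, (hgl a).2, chval_neg]
    simp
  rw [Finset.sum_congr rfl fun a _ => h1 a]
  by_cases hμ : μ = 0
  · subst hμ
    rw [if_pos rfl]
    have h2 : ∑ a : ↥A, chval (-(0 : DChar A)) a = (Fintype.card ↥A : ℂ) := by
      simp [chval_neg, chval_zero]
    rw [h2]
    simp [inv_mul_cancel₀ (show ((Fintype.card ↥A : ℂ)) ≠ 0 by exact_mod_cast Fintype.card_ne_zero)]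
  · have hne : -μ ≠ 0 := fun hc => hμ ((@neg_eq_zero (DChar A) _ μ).mp hc)
    rw [if_neg hμ, sum_chval_eq_zero hne]
    simp

private lemma comul_dP' (hgl : ∀ a : ↥A, IsGroupLike ((a : Hˣ) : H)) (μ : DChar A) :
    Coalgebra.comul (R := ℂ) (dP A μ)
      = (Fintype.card ↥A : ℂ)⁻¹ •
          ∑ a : ↥A, (chval μ a)⁻¹ • (((a : Hˣ) : H) ⊗ₜ[ℂ] ((a : Hˣ) : H)) := by
  rw [dP_eq, map_smul, map_sum]
  congr 1
  exact Finset.sum_congr rfl fun a _ => by rw [map_smul, (hgl a).1]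

open Classical in
private lemma scalar5 (hab : ∀ a b : ↥A, a * b = b * a) (μ : DChar A) (a b : ↥A) :
    ∑ ν : DChar A, (chval ν a)⁻¹ * (chval (μ - ν) b)⁻¹
      = if a = b then (Fintype.card ↥A : ℂ) * (chval μ a)⁻¹ else 0 := by
  have h1 : ∀ ν : DChar A, (chval ν a)⁻¹ * (chval (μ - ν) b)⁻¹
      = (chval μ b)⁻¹ * chval ν (a⁻¹ * b) := by
    intro ν
    rw [chval_sub, mul_inv, inv_inv, chval_mul, chval_inv]
    ring
  rw [Finset.sum_congr rfl fun ν _ => h1 ν, ← Finset.mul_sum, sum_chval_char hab]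
  by_cases hac : a = b
  · subst hac
    rw [if_pos (inv_mul_cancel a), if_pos rfl]
    ring
  · rw [if_neg (fun hc => hac (inv_mul_eq_one.mp hc)), if_neg hac, mul_zero]

private lemma comul_dP (hgl : ∀ a : ↥A, IsGroupLike ((a : Hˣ) : H))
    (hab : ∀ a b : ↥A, a * b = b * a) (μ : DChar A) :
    Coalgebra.comul (R := ℂ) (dP A μ) = ∑ ν : DChar A, dP A ν ⊗ₜ[ℂ] dP A (μ - ν) := by
  classical
  set c : ℂ := (Fintype.card ↥A : ℂ)⁻¹ with hc
  have hcc : c * c * (Fintype.card ↥A : ℂ) = c := by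
    rw [mul_assoc, inv_mul_cancel₀ (show ((Fintype.card ↥A : ℂ)) ≠ 0 by
      exact_mod_cast Fintype.card_ne_zero), mul_one]
  have per : ∀ ν : DChar A, dP A ν ⊗ₜ[ℂ] dP A (μ - ν)
      = (c * c) • ∑ a : ↥A, ∑ b : ↥A,
          ((chval ν a)⁻¹ * (chval (μ - ν) b)⁻¹) •
            (((a : Hˣ) : H) ⊗ₜ[ℂ] ((b : Hˣ) : H)) := by
    intro ν
    rw [dP_eq ν, dP_eq (μ - ν), TensorProduct.tmul_smul, ← TensorProduct.smul_tmul', smul_smul,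
      TensorProduct.sum_tmul]
    congr 1
    apply Finset.sum_congr rfl
    intro a _
    rw [TensorProduct.tmul_sum]
    apply Finset.sum_congr rfl
    intro b _
    rw [TensorProduct.tmul_smul, ← TensorProduct.smul_tmul', smul_smul, mul_comm]
  symm
  calc ∑ ν : DChar A, dP A ν ⊗ₜ[ℂ] dP A (μ - ν)
      = (c * c) • ∑ ν : DChar A, ∑ a : ↥A, ∑ b : ↥A,
          ((chval ν a)⁻¹ * (chval (μ - ν) b)⁻¹) •
            (((a : Hˣ) : H) ⊗ₜ[ℂ] ((b : Hˣ) : H)) := by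
        rw [Finset.smul_sum]
        exact Finset.sum_congr rfl fun ν _ => per ν
    _ = (c * c) • ∑ a : ↥A, ∑ b : ↥A,
          (∑ ν : DChar A, (chval ν a)⁻¹ * (chval (μ - ν) b)⁻¹) •
            (((a : Hˣ) : H) ⊗ₜ[ℂ] ((b : Hˣ) : H)) := by
        congr 1
        rw [Finset.sum_comm]
        apply Finset.sum_congr rfl
        intro a _
        rw [Finset.sum_comm]
        apply Finset.sum_congr rfl
        intro b _
        rw [Finset.sum_smul]
    _ = (c * c) • ∑ a : ↥A, ∑ b : ↥A,
          (if a = b then (Fintype.card ↥A : ℂ) * (chval μ a)⁻¹ else 0) •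
            (((a : Hˣ) : H) ⊗ₜ[ℂ] ((b : Hˣ) : H)) := by
        congr 1
        apply Finset.sum_congr rfl
        intro a _
        apply Finset.sum_congr rfl
        intro b _
        rw [scalar5 hab μ a b]
    _ = (c * c) • ∑ a : ↥A, ((Fintype.card ↥A : ℂ) * (chval μ a)⁻¹) •
          (((a : Hˣ) : H) ⊗ₜ[ℂ] ((a : Hˣ) : H)) := by
        congr 1
        apply Finset.sum_congr rfl
        intro a _
        simp only [ite_smul, zero_smul, Finset.sum_ite_eq, Finset.mem_univ, if_true]
    _ = Coalgebra.comul (R := ℂ) (dP A μ) := by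
        rw [comul_dP' hgl μ, ← hc]
        rw [Finset.sum_congr rfl (fun a _ => by
          rw [← smul_smul ((Fintype.card ↥A : ℂ)) ((chval μ a)⁻¹)]), ← Finset.smul_sum,
          smul_smul, hcc]
  
end Part3
-- ===== part 4 : subgroup lemmas =====
section Part4
variable {B : Subgroup Hˣ} (hBA : B ≤ A)

private lemma zw_comm_dP [Fintype A] {v : H} (hv : ZeroWeight₁ A v) (μ : DChar A) :
    v * dP A μ = dP A μ * v := by
  rw [dP_eq, mul_smul_comm, smul_mul_assoc, Finset.mul_sum, Finset.sum_mul]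
  congr 1
  apply Finset.sum_congr rfl
  intro b _
  rw [mul_smul_comm, smul_mul_assoc, hv b]

private lemma chval_resChar (μ : DChar A) (b : ↥B) :
    chval (resChar hBA μ) b = chval μ (Subgroup.inclusion hBA b) := rfl

private lemma coeB_eq_coeA (b : ↥B) :
    (((Subgroup.inclusion hBA b : ↥A) : Hˣ) : H) = ((b : Hˣ) : H) := rfl

private lemma resChar_sub (μ ν : DChar A) :
    resChar hBA (μ - ν) = resChar hBA μ - resChar hBA ν := by
  apply Additive.toMul.injective
  apply MonoidHom.ext
  intro b
  rfl

open Classical in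
private lemma dP_mul_dPB [Fintype A] [Fintype B] (μ : DChar A) (κ : DChar B) :
    dP A μ * dP B κ = if resChar hBA μ = κ then dP A μ else 0 := by
  have key : dP A μ * dP B κ
      = ((Fintype.card ↥B : ℂ)⁻¹ * ∑ b : ↥B, chval (resChar hBA μ - κ) b) • dP A μ := by
    rw [dP_eq (A := B) κ, mul_smul_comm, Finset.mul_sum, mul_smul]
    congr 1
    rw [Finset.sum_smul]
    apply Finset.sum_congr rfl
    intro b _
    rw [mul_smul_comm, ← coeB_eq_coeA hBA b, dP_mul_coe, smul_smul, chval_sub,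
      ← chval_resChar hBA, mul_comm ((chval (resChar hBA μ) b))]
  by_cases hμκ : resChar hBA μ = κ
  · rw [if_pos hμκ, key, hμκ]
    have h0 : κ - κ = (0 : DChar B) := sub_self κ
    rw [h0]
    have h1 : ∑ b : ↥B, chval (0 : DChar B) b = (Fintype.card ↥B : ℂ) := by simp [chval_zero]
    rw [h1, inv_mul_cancel₀ (by exact_mod_cast Fintype.card_ne_zero), one_smul]
  · have hne : resChar hBA μ - κ ≠ 0 := by
      intro hcon
      exact hμκ (sub_eq_zero.mp hcon)
    rw [if_neg hμκ, key, sum_chval_eq_zero hne, mul_zero, zero_smul]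

end Part4
-- ===== part 5 : surjectivity of resChar =====
section Part5
variable {B : Subgroup Hˣ}

private lemma resChar_surjective [Fintype A] [Fintype B]
    [Fintype (DChar A)] [Fintype (DChar B)] (hBA : B ≤ A)
    (hab : ∀ a b : ↥A, a * b = b * a) :
    Function.Surjective (resChar (H := H) hBA) := by
  letI : CommGroup ↥A := { (inferInstance : Group ↥A) with mul_comm := hab }
  letI : CommGroup ↥B :=
    { (inferInstance : Group ↥B) with
      mul_comm := fun a b => by
        have h := hab ⟨(a : Hˣ), hBA a.2⟩ ⟨(b : Hˣ), hBA b.2⟩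
        have h2 : ((a : Hˣ) * (b : Hˣ)) = ((b : Hˣ) * (a : Hˣ)) := congrArg Subtype.val h
        exact Subtype.ext h2 }
  -- the restriction homomorphism on multiplicative characters
  set ι : ↥B →* ↥A := Subgroup.inclusion hBA with hι
  let r : (↥A →* ℂˣ) →* (↥B →* ℂˣ) :=
    { toFun := fun f => f.comp ι
      map_one' := MonoidHom.one_comp ι
      map_mul' := fun f g => rfl }
  set N : Subgroup ↥A := ι.range with hN
  haveI : Finite ↥A := inferInstance
  haveI : Finite (↥A →* ℂˣ) := Finite.of_equiv (DChar A) Additive.toMul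
  haveI : Finite (↥B →* ℂˣ) := Finite.of_equiv (DChar B) Additive.toMul
  -- kernel of r is the character group of the quotient
  have hkerEquiv : Nonempty (↥r.ker ≃ (↥A ⧸ N →* ℂˣ)) := by
    refine ⟨{
      toFun := fun f => QuotientGroup.lift N f.1 (fun x hx => ?_)
      invFun := fun g => ⟨g.comp (QuotientGroup.mk' N), ?_⟩
      left_inv := ?_
      right_inv := ?_ }⟩
    · obtain ⟨b, rfl⟩ := hx
      have hf := f.2
      rw [MonoidHom.mem_ker] at hf
      exact DFunLike.congr_fun hf b
    · rw [MonoidHom.mem_ker]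
      apply MonoidHom.ext
      intro b
      show g (QuotientGroup.mk (ι b)) = 1
      have : (QuotientGroup.mk (ι b) : ↥A ⧸ N) = 1 := by
        rw [QuotientGroup.eq_one_iff]
        exact ⟨b, rfl⟩
      rw [this, map_one]
    · intro f
      apply Subtype.ext
      apply MonoidHom.ext
      intro a
      rfl
    · intro g
      apply MonoidHom.ext
      intro q
      induction q using QuotientGroup.induction_on with
      | H a => rfl
  -- counting
  have hcard1 : Nat.card ↥r.ker = Nat.card (↥A ⧸ N) := by
    rw [Nat.card_congr hkerEquiv.some]
    exact dual_card _
  have hcard2 : Nat.card N = Nat.card ↥B :=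
    Nat.card_congr (MulEquiv.toEquiv (MonoidHom.ofInjective (Subgroup.inclusion_injective hBA))).symm
  have hcard3 : Nat.card ↥A = Nat.card (↥A ⧸ N) * Nat.card N :=
    Subgroup.card_eq_card_quotient_mul_card_subgroup N
  have hcard4 : Nat.card (↥A →* ℂˣ) = Nat.card ↥r.range * Nat.card ↥r.ker := by
    rw [Subgroup.card_eq_card_quotient_mul_card_subgroup r.ker]
    congr 1
    exact Nat.card_congr (QuotientGroup.quotientKerEquivRange r).toEquiv
  have hrange : Nat.card ↥r.range = Nat.card (↥B →* ℂˣ) := by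
    have hA : Nat.card (↥A →* ℂˣ) = Nat.card ↥A := dual_card ↥A
    have hB : Nat.card (↥B →* ℂˣ) = Nat.card ↥B := dual_card ↥B
    have hkpos : 0 < Nat.card ↥r.ker := @Nat.card_pos _ ⟨(1 : ↥r.ker)⟩ _
    have : Nat.card ↥r.range * Nat.card ↥r.ker = Nat.card (↥B →* ℂˣ) * Nat.card ↥r.ker := by
      rw [← hcard4, hA, hcard3, hcard1, hB, hcard2, mul_comm]
    exact Nat.eq_of_mul_eq_mul_right hkpos this
  have hrtop : r.range = ⊤ := Subgroup.eq_top_of_card_eq _ hrange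
  have hrsurj : Function.Surjective r := MonoidHom.range_eq_top.mp hrtop
  -- transfer to resChar
  intro κ
  obtain ⟨f, hf⟩ := hrsurj (Additive.toMul κ)
  exact ⟨Additive.ofMul f, congrArg Additive.ofMul hf⟩

end Part5
-- ===== part 6 : dShift machinery =====
section Part6
variable (A) [Fintype A] [Fintype (DChar A)]
variable {R : Type*} [Ring R] [Algebra ℂ R]

private def dShift (f : DChar A → R) : R ⊗[ℂ] H := ∑ μ : DChar A, f μ ⊗ₜ[ℂ] dP A μ

variable {A}

private lemma dShift_mul (f g : DChar A → R) :
    dShift A (fun μ => f μ * g μ) = dShift A f * dShift A g := by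
  classical
  unfold dShift
  rw [Finset.sum_mul_sum]
  symm
  calc ∑ μ : DChar A, ∑ ν : DChar A, (f μ ⊗ₜ[ℂ] dP A μ) * (g ν ⊗ₜ[ℂ] dP A ν)
      = ∑ μ : DChar A, ∑ ν : DChar A,
          (if μ = ν then (f μ * g ν) ⊗ₜ[ℂ] dP A μ else 0) := by
        apply Finset.sum_congr rfl; intro μ _
        apply Finset.sum_congr rfl; intro ν _
        rw [Algebra.TensorProduct.tmul_mul_tmul, dP_mul_dP]
        split_ifs with hc
        · rfl
        · rw [TensorProduct.tmul_zero]
    _ = ∑ μ : DChar A, (f μ * g μ) ⊗ₜ[ℂ] dP A μ := by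
        apply Finset.sum_congr rfl; intro μ _
        rw [Finset.sum_ite_eq]
        simp

private lemma dShift_one (hab : ∀ a b : ↥A, a * b = b * a) :
    dShift A (fun _ => (1 : R)) = 1 := by
  unfold dShift
  rw [← TensorProduct.tmul_sum, sum_dP hab, Algebra.TensorProduct.one_def]

private lemma dShift_isUnit (hab : ∀ a b : ↥A, a * b = b * a) {f : DChar A → R}
    (hf : ∀ μ, IsUnit (f μ)) :
    IsUnit (dShift A f) ∧
      dShift A (fun μ => Ring.inverse (f μ)) = Ring.inverse (dShift A f) := by
  have h1 : dShift A f * dShift A (fun μ => Ring.inverse (f μ)) = 1 := by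
    rw [← dShift_mul]
    have : (fun μ => f μ * Ring.inverse (f μ)) = fun _ => (1 : R) := by
      funext μ; exact Ring.mul_inverse_cancel _ (hf μ)
    rw [this, dShift_one hab]
  have h2 : dShift A (fun μ => Ring.inverse (f μ)) * dShift A f = 1 := by
    rw [← dShift_mul]
    have : (fun μ => Ring.inverse (f μ) * f μ) = fun _ => (1 : R) := by
      funext μ; exact Ring.inverse_mul_cancel _ (hf μ)
    rw [this, dShift_one hab]
  let u : (R ⊗[ℂ] H)ˣ := ⟨dShift A f, dShift A (fun μ => Ring.inverse (f μ)), h1, h2⟩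
  refine ⟨u.isUnit, ?_⟩
  have hu : dShift A f = (u : R ⊗[ℂ] H) := rfl
  rw [hu, Ring.inverse_unit]
  rfl

-- the auxiliary embedding H⊗H → (H⊗H)⊗H in positions 2,3
private def e23 : H ⊗[ℂ] H →ₐ[ℂ] (H ⊗[ℂ] H) ⊗[ℂ] H :=
  ((Algebra.TensorProduct.assoc ℂ ℂ ℂ H H H).symm).toAlgHom.comp Algebra.TensorProduct.includeRight

private lemma e23_apply (z : H ⊗[ℂ] H) :
    e23 z = (Algebra.TensorProduct.assoc ℂ ℂ ℂ H H H).symm ((1 : H) ⊗ₜ[ℂ] z) := rfl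

private lemma e23_tmul (y z : H) :
    e23 (y ⊗ₜ[ℂ] z) = ((1 : H) ⊗ₜ[ℂ] y) ⊗ₜ[ℂ] z := rfl

private lemma J12_3_dShift (f : DChar A → H) :
    J12_3 (dShift A f) = dShift A (fun μ => Bialgebra.comulAlgHom ℂ H (f μ)) := by
  unfold dShift
  rw [map_sum]
  apply Finset.sum_congr rfl
  intro μ _
  rfl

private lemma e23_dShift (f : DChar A → H) :
    e23 (dShift A f) = dShift A (fun μ => (1 : H) ⊗ₜ[ℂ] f μ) := by
  unfold dShift
  rw [map_sum]
  apply Finset.sum_congr rfl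
  intro μ _
  rfl

private lemma J1_23_dShift (hgl : ∀ a : ↥A, IsGroupLike ((a : Hˣ) : H))
    (hab : ∀ a b : ↥A, a * b = b * a) (f : DChar A → H) :
    J1_23 (dShift A f) = dShift A (fun κ => dShift A (fun ν => f (κ + ν))) := by
  unfold dShift
  rw [map_sum]
  have per : ∀ μ : DChar A, J1_23 (f μ ⊗ₜ[ℂ] dP A μ)
      = ∑ ν : DChar A, (f μ ⊗ₜ[ℂ] dP A ν) ⊗ₜ[ℂ] dP A (μ - ν) := by
    intro μ
    show (Algebra.TensorProduct.assoc ℂ ℂ ℂ H H H).symm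
        (Algebra.TensorProduct.map (AlgHom.id ℂ H) (Bialgebra.comulAlgHom ℂ H)
          (f μ ⊗ₜ[ℂ] dP A μ)) = _
    rw [Algebra.TensorProduct.map_tmul]
    have hc : Bialgebra.comulAlgHom ℂ H (dP A μ) = ∑ ν : DChar A, dP A ν ⊗ₜ[ℂ] dP A (μ - ν) := by
      rw [Bialgebra.comulAlgHom_apply, comul_dP hgl hab]
    rw [hc, AlgHom.coe_id, id_eq, TensorProduct.tmul_sum, map_sum]
    apply Finset.sum_congr rfl
    intro ν _
    rw [Algebra.TensorProduct.assoc_symm_tmul]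
  rw [Finset.sum_congr rfl fun μ _ => per μ]
  have hsub : ∀ κ ν : DChar A, κ + ν - ν = κ := fun κ ν => add_sub_cancel_right κ ν
  calc ∑ μ : DChar A, ∑ ν : DChar A, (f μ ⊗ₜ[ℂ] dP A ν) ⊗ₜ[ℂ] dP A (μ - ν)
      = ∑ ν : DChar A, ∑ μ : DChar A, (f μ ⊗ₜ[ℂ] dP A ν) ⊗ₜ[ℂ] dP A (μ - ν) :=
        Finset.sum_comm
    _ = ∑ ν : DChar A, ∑ κ : DChar A, (f (κ + ν) ⊗ₜ[ℂ] dP A ν) ⊗ₜ[ℂ] dP A κ := by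
        apply Finset.sum_congr rfl
        intro ν _
        exact (Fintype.sum_equiv (Equiv.addRight ν)
          (fun κ => (f (κ + ν) ⊗ₜ[ℂ] dP A ν) ⊗ₜ[ℂ] dP A κ)
          (fun μ => (f μ ⊗ₜ[ℂ] dP A ν) ⊗ₜ[ℂ] dP A (μ - ν))
          (fun κ => by simp only [Equiv.coe_addRight, hsub])).symm
    _ = ∑ κ : DChar A, ∑ ν : DChar A, (f (κ + ν) ⊗ₜ[ℂ] dP A ν) ⊗ₜ[ℂ] dP A κ :=
        Finset.sum_comm
    _ = ∑ κ : DChar A, (∑ ν : DChar A, f (κ + ν) ⊗ₜ[ℂ] dP A ν) ⊗ₜ[ℂ] dP A κ := by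
        apply Finset.sum_congr rfl
        intro κ _
        rw [TensorProduct.sum_tmul]

end Part6
-- ===== part 7 : coassociativity and counit =====
section Part7

private lemma algAssocSymm_eq (w : H ⊗[ℂ] (H ⊗[ℂ] H)) :
    (Algebra.TensorProduct.assoc ℂ ℂ ℂ H H H).symm w = (TensorProduct.assoc ℂ H H H).symm w := by
  induction w using TensorProduct.induction_on with
  | zero =>
    rw [map_zero]
    exact ((TensorProduct.assoc ℂ H H H).symm.map_zero).symm
  | add u v hu hv =>
    rw [map_add, (TensorProduct.assoc ℂ H H H).symm.map_add, hu, hv]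
  | tmul y z =>
    induction z using TensorProduct.induction_on with
    | zero =>
      rw [TensorProduct.tmul_zero, map_zero]
      exact ((TensorProduct.assoc ℂ H H H).symm.map_zero).symm
    | add u v hu hv =>
      rw [TensorProduct.tmul_add, map_add, (TensorProduct.assoc ℂ H H H).symm.map_add, hu, hv]
    | tmul u v => rw [Algebra.TensorProduct.assoc_symm_tmul, TensorProduct.assoc_symm_tmul]

private lemma J12_3_eq_rTensor (z : H ⊗[ℂ] H) :
    J12_3 z = LinearMap.rTensor H (Coalgebra.comul (R := ℂ) (A := H)) z := by
  induction z using TensorProduct.induction_on with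
  | zero => rw [map_zero, map_zero]
  | add u v hu hv => rw [map_add, map_add, hu, hv]
  | tmul y z => rfl

private lemma mapIdComul_eq_lTensor (z : H ⊗[ℂ] H) :
    Algebra.TensorProduct.map (AlgHom.id ℂ H) (Bialgebra.comulAlgHom ℂ H) z
      = LinearMap.lTensor H (Coalgebra.comul (R := ℂ) (A := H)) z := by
  induction z using TensorProduct.induction_on with
  | zero => rw [map_zero, map_zero]
  | add u v hu hv => rw [map_add, map_add, hu, hv]
  | tmul y z => rfl

private lemma coassoc_alg (y : H) :
    J12_3 (Bialgebra.comulAlgHom ℂ H y) = J1_23 (Bialgebra.comulAlgHom ℂ H y) := by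
  have h1 : J1_23 (Bialgebra.comulAlgHom ℂ H y)
      = (Algebra.TensorProduct.assoc ℂ ℂ ℂ H H H).symm
          (LinearMap.lTensor H (Coalgebra.comul (R := ℂ)) (Coalgebra.comul (R := ℂ) y)) := by
    show (Algebra.TensorProduct.assoc ℂ ℂ ℂ H H H).symm
        (Algebra.TensorProduct.map (AlgHom.id ℂ H) (Bialgebra.comulAlgHom ℂ H)
          (Bialgebra.comulAlgHom ℂ H y)) = _
    rw [mapIdComul_eq_lTensor]
    rfl
  rw [h1, algAssocSymm_eq, J12_3_eq_rTensor]
  exact (Coalgebra.coassoc_symm_apply (R := ℂ) y).symm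

private lemma epsId_tmul (y z : H) :
    epsId (y ⊗ₜ[ℂ] z) = Coalgebra.counit (R := ℂ) y • z := rfl

private lemma idEps_tmul (y z : H) :
    idEps (y ⊗ₜ[ℂ] z) = Coalgebra.counit (R := ℂ) z • y := rfl

private lemma epsId_comul (y : H) : epsId (Bialgebra.comulAlgHom ℂ H y) = y := by
  have h1 : ∀ z : H ⊗[ℂ] H, epsId z
      = TensorProduct.lid ℂ H (LinearMap.rTensor H (Coalgebra.counit (R := ℂ) (A := H)) z) := by
    intro z
    induction z using TensorProduct.induction_on with
    | zero => rw [map_zero, map_zero, map_zero]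
    | add u v hu hv => rw [map_add, map_add, map_add, hu, hv]
    | tmul y z => rfl
  rw [h1]
  show TensorProduct.lid ℂ H
      (LinearMap.rTensor H (Coalgebra.counit (R := ℂ)) (Coalgebra.comul (R := ℂ) y)) = y
  rw [Coalgebra.rTensor_counit_comul, TensorProduct.lid_tmul, one_smul]

private lemma idEps_comul (y : H) : idEps (Bialgebra.comulAlgHom ℂ H y) = y := by
  have h1 : ∀ z : H ⊗[ℂ] H, idEps z
      = TensorProduct.rid ℂ H (LinearMap.lTensor H (Coalgebra.counit (R := ℂ) (A := H)) z) := by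
    intro z
    induction z using TensorProduct.induction_on with
    | zero => rw [map_zero, map_zero, map_zero]
    | add u v hu hv => rw [map_add, map_add, map_add, hu, hv]
    | tmul y z => rfl
  rw [h1]
  show TensorProduct.rid ℂ H
      (LinearMap.lTensor H (Coalgebra.counit (R := ℂ)) (Coalgebra.comul (R := ℂ) y)) = y
  rw [Coalgebra.lTensor_counit_comul, TensorProduct.rid_tmul, one_smul]

end Part7
-- ===== part 8 : AlgHom Ring.inverse + misc =====
section Part8

private lemma ringInverse_algMap {R S : Type*} [Ring R] [Ring S] [Algebra ℂ R] [Algebra ℂ S]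
    (g : R →ₐ[ℂ] S) {a : R} (h : IsUnit a) : g (Ring.inverse a) = Ring.inverse (g a) := by
  obtain ⟨u, rfl⟩ := h
  have h1 : g ↑u = ((Units.map (g : R →* S) u : Sˣ) : S) := (Units.coe_map _ _).symm
  rw [Ring.inverse_unit, h1, Ring.inverse_unit]
  exact (Units.coe_map_inv (g : R →* S) u).symm

private lemma J12_3_tmul_one (X : H) :
    J12_3 ((1 : H) ⊗ₜ[ℂ] X) = (1 : H ⊗[ℂ] H) ⊗ₜ[ℂ] X := by
  show Algebra.TensorProduct.map (Bialgebra.comulAlgHom ℂ H) (AlgHom.id ℂ H) ((1 : H) ⊗ₜ[ℂ] X) = _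
  rw [Algebra.TensorProduct.map_tmul, map_one]
  rfl

private lemma J1_23_tmul_one (X : H) :
    J1_23 ((1 : H) ⊗ₜ[ℂ] X) = e23 (Bialgebra.comulAlgHom ℂ H X) := rfl

private lemma e23_tmul_one (X : H) :
    e23 ((1 : H) ⊗ₜ[ℂ] X) = (1 : H ⊗[ℂ] H) ⊗ₜ[ℂ] X := by
  rw [e23_tmul, Algebra.TensorProduct.one_def]

private lemma J1_23_tmul (y : H) (z : H) :
    J1_23 (y ⊗ₜ[ℂ] z)
      = (Algebra.TensorProduct.assoc ℂ ℂ ℂ H H H).symm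
          (y ⊗ₜ[ℂ] (Coalgebra.comul (R := ℂ) z)) := rfl

end Part8
end Aux

set_option maxHeartbeats 2000000 in
set_option synthInstance.maxHeartbeats 200000 in
/-- **Proposition (IRF-vertex transformations).**
Let `Ā ≤ A`, let `J : A* → H ⊗ H` be a dynamical twist for `A`, and let `x : A* → H` have
invertible values, zero weight w.r.t. `Ā`, and `ε(x(λ)) = 1`.  If
`J^x(λ) = Δ(x(λ)) J(λ) (x¹(λ-h⁽²⁾))⁻¹ (x²(λ))⁻¹` factors through the restriction map
`A* → Ā*`, i.e. `J^x(λ) = J̄^x(λ̄)` for some `J̄^x : Ā* → H ⊗ H`, then `J̄^x` is a dynamical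
twist for `Ā`. -/
theorem IRFvertex_transform_isDynamicalTwist
    {H : Type*} [Ring H] [HopfAlgebra ℂ H]
    (A B : Subgroup Hˣ) [Fintype A] [Fintype B]
    [Fintype (DChar A)] [Fintype (DChar B)]
    (hBA : B ≤ A)
    (hgl : ∀ a : A, IsGroupLike ((a : Hˣ) : H))
    (hab : ∀ a b : A, a * b = b * a)
    (J : DChar A → H ⊗[ℂ] H)
    (hJ : IsDynamicalTwist A J)
    (x : DChar A → H)
    (hxu : ∀ lam, IsUnit (x lam))
    (hxw : ∀ lam, ZeroWeight₁ B (x lam))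
    (hxe : ∀ lam, Bialgebra.counitAlgHom ℂ H (x lam) = 1)
    (Jbarx : DChar B → H ⊗[ℂ] H)
    (hJx : ∀ lam : DChar A,
      Bialgebra.comulAlgHom ℂ H (x lam) * J lam
        * Ring.inverse (x1shift A x lam)
        * Ring.inverse ((1 : H) ⊗ₜ[ℂ] x lam)
          = Jbarx (resChar hBA lam)) :
    IsDynamicalTwist B Jbarx := by
  classical
  obtain ⟨hJw, hJu, hJeq, hJeps⟩ := hJ
  have hsurj : Function.Surjective (resChar (H := H) hBA) := resChar_surjective hBA hab
  have hglB : ∀ b : ↥B, IsGroupLike ((b : Hˣ) : H) := fun b => hgl ⟨(b : Hˣ), hBA b.2⟩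
  set Δa : H →ₐ[ℂ] H ⊗[ℂ] H := Bialgebra.comulAlgHom ℂ H with hΔa
  set Kf : DChar A → H ⊗[ℂ] H := fun lam =>
    Δa (x lam) * J lam * Ring.inverse (x1shift A x lam)
      * Ring.inverse ((1 : H) ⊗ₜ[ℂ] x lam) with hKf
  have hKJ : ∀ lam, Kf lam = Jbarx (resChar hBA lam) := hJx
  -- units
  have hSu : ∀ lam, IsUnit (x1shift A x lam) := fun lam =>
    (dShift_isUnit hab (f := fun μ => x (lam - μ)) (fun μ => hxu _)).1
  have hSinv : ∀ lam, dShift A (fun μ => Ring.inverse (x (lam - μ)))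
      = Ring.inverse (x1shift A x lam) := fun lam =>
    (dShift_isUnit hab (f := fun μ => x (lam - μ)) (fun μ => hxu _)).2
  have h1xu : ∀ lam, IsUnit ((1 : H) ⊗ₜ[ℂ] x lam) := fun lam =>
    (hxu lam).map (Algebra.TensorProduct.includeRight (R := ℂ) (A := H) (B := H))
  have hKfu : ∀ lam, IsUnit (Kf lam) := fun lam =>
    ((((hxu lam).map Δa).mul (hJu lam)).mul (isUnit_ringInverse' (hSu lam))).mul
      (isUnit_ringInverse' (h1xu lam))
  -- zero weight of Kf
  have hzw : ∀ lam : DChar A, ZeroWeight₂ B (Kf lam) := by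
    intro lam b
    set t : H ⊗[ℂ] H := ((b : Hˣ) : H) ⊗ₜ[ℂ] ((b : Hˣ) : H) with ht
    have c1 : Δa (x lam) * t = t * Δa (x lam) := by
      have hgb : Δa ((b : Hˣ) : H) = t := (hglB b).1
      rw [← hgb, ← map_mul, hxw lam b, map_mul]
    have c2 : J lam * t = t * J lam := hJw lam ⟨(b : Hˣ), hBA b.2⟩
    have cS : x1shift A x lam * t = t * x1shift A x lam := by
      unfold x1shift
      rw [Finset.sum_mul, Finset.mul_sum]
      apply Finset.sum_congr rfl
      intro μ _
      rw [ht, Algebra.TensorProduct.tmul_mul_tmul, Algebra.TensorProduct.tmul_mul_tmul]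
      have hPb : dP A μ * ((b : Hˣ) : H) = ((b : Hˣ) : H) * dP A μ := by
        rw [← coeB_eq_coeA hBA b, dP_mul_coe, coe_mul_dP]
      rw [hPb, hxw (lam - μ) b]
    have c3 : Ring.inverse (x1shift A x lam) * t = t * Ring.inverse (x1shift A x lam) :=
      (commute_ringInverse (hSu lam) cS.symm).symm
    have c1x : ((1 : H) ⊗ₜ[ℂ] x lam) * t = t * ((1 : H) ⊗ₜ[ℂ] x lam) := by
      rw [ht, Algebra.TensorProduct.tmul_mul_tmul, Algebra.TensorProduct.tmul_mul_tmul,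
        one_mul, mul_one, hxw lam b]
    have c4 : Ring.inverse ((1 : H) ⊗ₜ[ℂ] x lam) * t = t * Ring.inverse ((1 : H) ⊗ₜ[ℂ] x lam) :=
      (commute_ringInverse (h1xu lam) c1x.symm).symm
    have C1 : Commute (Δa (x lam)) t := c1
    have C2 : Commute (J lam) t := c2
    have C3 : Commute (Ring.inverse (x1shift A x lam)) t := c3
    have C4 : Commute (Ring.inverse ((1 : H) ⊗ₜ[ℂ] x lam)) t := c4
    exact (((C1.mul_left C2).mul_left C3).mul_left C4 : _)
  -- counit conditions for Kf
  have hepsS : ∀ lam, epsId (x1shift A x lam) = 1 := by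
    intro lam
    unfold x1shift
    rw [map_sum]
    have : ∀ μ : DChar A, epsId (x (lam - μ) ⊗ₜ[ℂ] dP A μ) = dP A μ := by
      intro μ
      rw [epsId_tmul]
      have hx1 : Coalgebra.counit (R := ℂ) (x (lam - μ)) = 1 := hxe (lam - μ)
      rw [hx1, one_smul]
    rw [Finset.sum_congr rfl fun μ _ => this μ, sum_dP hab]
  have hidES : ∀ lam, idEps (x1shift A x lam) = x lam := by
    intro lam
    unfold x1shift
    rw [map_sum]
    have : ∀ μ : DChar A, idEps (x (lam - μ) ⊗ₜ[ℂ] dP A μ)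
        = if μ = 0 then x (lam - μ) else 0 := by
      intro μ
      rw [idEps_tmul, counit_dP hgl]
      split_ifs with hc
      · rw [one_smul]
      · rw [zero_smul]
    rw [Finset.sum_congr rfl fun μ _ => this μ, Finset.sum_ite_eq' Finset.univ (0 : DChar A)]
    have hz : lam - 0 = lam := sub_zero lam
    simp [hz]
  have hepsKf : ∀ lam, epsId (Kf lam) = 1 := by
    intro lam
    rw [hKf]
    show epsId (Δa (x lam) * J lam * Ring.inverse (x1shift A x lam)
      * Ring.inverse ((1 : H) ⊗ₜ[ℂ] x lam)) = 1
    rw [map_mul, map_mul, map_mul, ringInverse_algMap epsId (hSu lam),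
      ringInverse_algMap epsId (h1xu lam), hepsS lam, Ring.inverse_one,
      (hJeps lam).1, epsId_comul, mul_one, mul_one]
    have h1 : epsId ((1 : H) ⊗ₜ[ℂ] x lam) = x lam := by
      rw [epsId_tmul, Bialgebra.counit_one, one_smul]
    rw [h1, Ring.mul_inverse_cancel _ (hxu lam)]
  have hidEKf : ∀ lam, idEps (Kf lam) = 1 := by
    intro lam
    rw [hKf]
    show idEps (Δa (x lam) * J lam * Ring.inverse (x1shift A x lam)
      * Ring.inverse ((1 : H) ⊗ₜ[ℂ] x lam)) = 1
    rw [map_mul, map_mul, map_mul, ringInverse_algMap idEps (hSu lam),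
      ringInverse_algMap idEps (h1xu lam), hidES lam, (hJeps lam).2, idEps_comul, mul_one]
    have h1 : idEps ((1 : H) ⊗ₜ[ℂ] x lam) = 1 := by
      rw [idEps_tmul]
      have hx1 : Coalgebra.counit (R := ℂ) (x lam) = 1 := hxe lam
      rw [hx1, one_smul]
    rw [h1, Ring.inverse_one, mul_one, Ring.mul_inverse_cancel _ (hxu lam)]
  -- the fiber identity
  have hFib : ∀ lam : DChar A,
      (∑ ν : DChar B, Jbarx (resChar hBA lam - ν) ⊗ₜ[ℂ] dP B ν)
        = dShift A (fun μ => Kf (lam - μ)) := by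
    intro lam
    have step1 : ∀ ν : DChar B, Jbarx (resChar hBA lam - ν) ⊗ₜ[ℂ] dP B ν
        = ∑ μ : DChar A, Jbarx (resChar hBA lam - ν) ⊗ₜ[ℂ] (dP A μ * dP B ν) := by
      intro ν
      rw [← TensorProduct.tmul_sum, ← Finset.sum_mul, sum_dP hab, one_mul]
    rw [Finset.sum_congr rfl fun ν _ => step1 ν, Finset.sum_comm]
    unfold dShift
    apply Finset.sum_congr rfl
    intro μ _
    have step2 : ∀ ν : DChar B, Jbarx (resChar hBA lam - ν) ⊗ₜ[ℂ] (dP A μ * dP B ν)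
        = if resChar hBA μ = ν then Jbarx (resChar hBA lam - ν) ⊗ₜ[ℂ] dP A μ else 0 := by
      intro ν
      rw [dP_mul_dPB hBA]
      split_ifs with hc
      · rfl
      · rw [TensorProduct.tmul_zero]
    rw [Finset.sum_congr rfl fun ν _ => step2 ν, Finset.sum_ite_eq Finset.univ (resChar hBA μ)]
    simp only [Finset.mem_univ, if_true]
    rw [hKJ (lam - μ), resChar_sub]
  -- expression for J1_23 on x1shift
  have hJ123S : ∀ lam, J1_23 (x1shift A x lam)
      = ∑ μ : DChar A, (Algebra.TensorProduct.assoc ℂ ℂ ℂ H H H).symm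
          (x (lam - μ) ⊗ₜ[ℂ] Coalgebra.comul (R := ℂ) (dP A μ)) := by
    intro lam
    unfold x1shift
    rw [map_sum]
    exact Finset.sum_congr rfl fun μ _ => J1_23_tmul _ _
  have hcomm6 : ∀ lam, e23 (J lam) * J1_23 (x1shift A x lam)
      = J1_23 (x1shift A x lam) * e23 (J lam) := by
    intro lam
    rw [hJ123S lam, Finset.mul_sum, Finset.sum_mul]
    apply Finset.sum_congr rfl
    intro μ _
    rw [e23_apply, ← map_mul, ← map_mul]
    congr 1
    rw [Algebra.TensorProduct.tmul_mul_tmul, Algebra.TensorProduct.tmul_mul_tmul, one_mul,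
      mul_one]
    congr 1
    rw [comul_dP' hgl, mul_smul_comm, smul_mul_assoc]
    congr 1
    rw [Finset.mul_sum, Finset.sum_mul]
    apply Finset.sum_congr rfl
    intro a _
    rw [mul_smul_comm, smul_mul_assoc, hJw lam a]
  have hI2x : ∀ lam, J1_23 (x1shift A x lam) = dShift A (fun κ => x1shift A x (lam - κ)) := by
    intro lam
    have h0 : x1shift A x lam = dShift A (fun μ => x (lam - μ)) := rfl
    rw [h0, J1_23_dShift hgl hab]
    congr 1
    funext κ
    have h1 : (fun ν => x (lam - (κ + ν))) = fun ν => x ((lam - κ) - ν) := by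
      funext ν
      have h2 : lam - (κ + ν) = lam - κ - ν := sub_add_eq_sub_sub lam κ ν
      rw [h2]
    show dShift A (fun ν => x (lam - (κ + ν))) = _
    rw [h1]
    rfl
  have hKcancel : ∀ lam', Ring.inverse (Δa (x lam')) * Kf lam'
      = J lam' * (Ring.inverse (x1shift A x lam') * Ring.inverse ((1 : H) ⊗ₜ[ℂ] x lam')) := by
    intro lam'
    rw [hKf]
    show Ring.inverse (Δa (x lam'))
        * (Δa (x lam') * J lam' * Ring.inverse (x1shift A x lam')
          * Ring.inverse ((1 : H) ⊗ₜ[ℂ] x lam')) = _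
    rw [mul_assoc (Δa (x lam') * J lam'), mul_assoc (Δa (x lam')),
      Ring.inverse_mul_cancel_left _ _ ((hxu lam').map Δa)]
  -- the main twist equation for Kf
  have hmain : ∀ lam : DChar A,
      J12_3 (Kf lam) * dShift A (fun μ => Kf (lam - μ))
        = J1_23 (Kf lam) * e23 (Kf lam) := by
    intro lam
    set X := x lam with hX
    set S := x1shift A x lam with hS
    set j := J lam with hj
    set Q := dShift A (fun μ => Kf (lam - μ)) with hQ
    set e3X : (H ⊗[ℂ] H) ⊗[ℂ] H := (1 : H ⊗[ℂ] H) ⊗ₜ[ℂ] X with he3X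
    have ue3X : IsUnit e3X := by
      rw [he3X]
      have h := (hxu lam).map (Algebra.TensorProduct.includeRight (R := ℂ) (A := H ⊗[ℂ] H) (B := H))
      rwa [Algebra.TensorProduct.includeRight_apply] at h
    have hL1 : J12_3 (Kf lam)
        = J12_3 (Δa X) * J12_3 j * Ring.inverse (J12_3 S) * Ring.inverse e3X := by
      rw [hKf]
      show J12_3 (Δa X * j * Ring.inverse S * Ring.inverse ((1 : H) ⊗ₜ[ℂ] X)) = _
      rw [map_mul, map_mul, map_mul, ringInverse_algMap J12_3 (hSu lam),
        ringInverse_algMap J12_3 (h1xu lam), J12_3_tmul_one]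
    have hE1' : e3X * Q = Q * e3X := by
      rw [hQ, ← hFib lam, Finset.mul_sum, Finset.sum_mul]
      apply Finset.sum_congr rfl
      intro ν _
      rw [he3X, Algebra.TensorProduct.tmul_mul_tmul, Algebra.TensorProduct.tmul_mul_tmul,
        one_mul, mul_one]
      congr 1
      exact zw_comm_dP (hxw lam) ν
    have hE1 : Ring.inverse e3X * Q = Q * Ring.inverse e3X :=
      (commute_ringInverse (R := (H ⊗[ℂ] H) ⊗[ℂ] H) (a := Q) (u := e3X) ue3X hE1'.symm).symm
    have hE2 : Ring.inverse (J12_3 S) * Q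
        = dShift A (fun μ => J (lam - μ))
          * (dShift A (fun μ => Ring.inverse (x1shift A x (lam - μ)))
            * dShift A (fun μ => Ring.inverse ((1 : H) ⊗ₜ[ℂ] x (lam - μ)))) := by
      have h0 : J12_3 S = dShift A (fun μ => Δa (x (lam - μ))) := by
        show J12_3 (dShift A fun μ => x (lam - μ)) = _
        exact J12_3_dShift _
      have hinv : Ring.inverse (J12_3 S) = dShift A (fun μ => Ring.inverse (Δa (x (lam - μ)))) := by
        rw [h0, ← (dShift_isUnit hab (fun μ => (hxu (lam - μ)).map Δa)).2]
      rw [hinv, hQ, ← dShift_mul, ← dShift_mul, ← dShift_mul]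
      congr 1
      funext μ
      exact hKcancel (lam - μ)
    have hE3 : ∀ r : (H ⊗[ℂ] H) ⊗[ℂ] H,
        J12_3 j * (dShift A (fun μ => J (lam - μ)) * r) = J1_23 j * (e23 j * r) := by
      intro r
      have h := hJeq lam
      have h1 : (∑ μ : DChar A, J (lam - μ) ⊗ₜ[ℂ] dP A μ) = dShift A (fun μ => J (lam - μ)) := rfl
      have h2 : (Algebra.TensorProduct.assoc ℂ ℂ ℂ H H H).symm ((1 : H) ⊗ₜ[ℂ] j) = e23 j := rfl
      rw [h1, h2] at h
      rw [← mul_assoc, h, mul_assoc]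
    have hE4 : dShift A (fun μ => Ring.inverse (x1shift A x (lam - μ)))
        = Ring.inverse (J1_23 S) := by
      rw [hI2x lam, ← (dShift_isUnit hab (fun κ => hSu (lam - κ))).2]
    have hE5 : dShift A (fun μ => Ring.inverse ((1 : H) ⊗ₜ[ℂ] x (lam - μ)))
        = Ring.inverse (e23 S) := by
      have h0 : e23 S = dShift A (fun μ => (1 : H) ⊗ₜ[ℂ] x (lam - μ)) := e23_dShift _
      rw [h0, ← (dShift_isUnit hab (fun μ => h1xu (lam - μ))).2]
    have hE6 : ∀ r : (H ⊗[ℂ] H) ⊗[ℂ] H,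
        e23 j * (Ring.inverse (J1_23 S) * r) = Ring.inverse (J1_23 S) * (e23 j * r) := by
      intro r
      have uu : IsUnit (J1_23 S) := (hSu lam).map J1_23
      rw [← mul_assoc, commute_ringInverse uu (hcomm6 lam), mul_assoc]
    have hR : J1_23 (Kf lam) * e23 (Kf lam)
        = J12_3 (Δa X) * (J1_23 j * (Ring.inverse (J1_23 S)
            * (e23 j * (Ring.inverse (e23 S) * Ring.inverse e3X)))) := by
      rw [hKf]
      show J1_23 (Δa X * j * Ring.inverse S * Ring.inverse ((1 : H) ⊗ₜ[ℂ] X))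
          * e23 (Δa X * j * Ring.inverse S * Ring.inverse ((1 : H) ⊗ₜ[ℂ] X)) = _
      rw [map_mul, map_mul, map_mul, map_mul, map_mul, map_mul,
        ringInverse_algMap J1_23 (hSu lam), ringInverse_algMap J1_23 (h1xu lam),
        ringInverse_algMap e23 (hSu lam), ringInverse_algMap e23 (h1xu lam),
        J1_23_tmul_one, e23_tmul_one, ← coassoc_alg]
      simp only [mul_assoc]
      rw [Ring.inverse_mul_cancel_left _ _ (((hxu lam).map Δa).map e23)]
    calc J12_3 (Kf lam) * Q
        = J12_3 (Δa X) * (J12_3 j * (Ring.inverse (J12_3 S) * (Ring.inverse e3X * Q))) := by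
          rw [hL1]; simp only [mul_assoc]
      _ = J12_3 (Δa X) * (J12_3 j * (Ring.inverse (J12_3 S) * (Q * Ring.inverse e3X))) := by
          rw [hE1]
      _ = J12_3 (Δa X) * (J12_3 j * (Ring.inverse (J12_3 S) * Q * Ring.inverse e3X)) := by
          rw [mul_assoc (Ring.inverse (J12_3 S))]
      _ = J12_3 (Δa X) * (J12_3 j * (dShift A (fun μ => J (lam - μ))
            * (dShift A (fun μ => Ring.inverse (x1shift A x (lam - μ)))
              * dShift A (fun μ => Ring.inverse ((1 : H) ⊗ₜ[ℂ] x (lam - μ))))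
            * Ring.inverse e3X)) := by
          rw [hE2]
      _ = J12_3 (Δa X) * (J12_3 j * (dShift A (fun μ => J (lam - μ))
            * (Ring.inverse (J1_23 S) * (Ring.inverse (e23 S) * Ring.inverse e3X)))) := by
          rw [hE4, hE5]; simp only [mul_assoc]
      _ = J12_3 (Δa X) * (J1_23 j * (e23 j
            * (Ring.inverse (J1_23 S) * (Ring.inverse (e23 S) * Ring.inverse e3X)))) := by
          rw [hE3]
      _ = J12_3 (Δa X) * (J1_23 j * (Ring.inverse (J1_23 S)
            * (e23 j * (Ring.inverse (e23 S) * Ring.inverse e3X)))) := by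
          rw [hE6]
      _ = J1_23 (Kf lam) * e23 (Kf lam) := (hR).symm
  -- assemble
  refine ⟨?_, ?_, ?_, ?_⟩
  · intro ν
    obtain ⟨lam, rfl⟩ := hsurj ν
    rw [← hKJ lam]
    exact hzw lam
  · intro ν
    obtain ⟨lam, rfl⟩ := hsurj ν
    rw [← hKJ lam]
    exact hKfu lam
  · intro ν
    obtain ⟨lam, rfl⟩ := hsurj ν
    rw [← hKJ lam, hFib lam]
    have he : (Algebra.TensorProduct.assoc ℂ ℂ ℂ H H H).symm ((1 : H) ⊗ₜ[ℂ] Kf lam)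
        = e23 (Kf lam) := rfl
    rw [he]
    exact hmain lam
  · intro ν
    obtain ⟨lam, rfl⟩ := hsurj ν
    rw [← hKJ lam]
    exact ⟨hepsKf lam, hidEKf lam⟩
end
end

section
/- Let B be an abelian group (written additively) and let F : B × B → B, written (λ, μ) ↦ F_λ(μ), be such that F_λ : B → B is a bijection for each λ ∈ B. Then F satisfies the functional equation F_λ(a + b) = F_λ(b) + F_{λ−b}(a) for all λ, a, b ∈ B if and only if there exists a bijective function f : B → B such that F_λ(μ) = f(λ) − f(λ−μ) for all λ, μ ∈ B. -/
/-- **Functional-equation core of the classification of vertex-IRF transformations.**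
Let `B` be an abelian group and `F : B × B → B`, `(λ, μ) ↦ F_λ(μ)`, with each `F_λ` bijective.
Then `F_λ(a+b) = F_λ(b) + F_{λ-b}(a)` for all `λ, a, b` if and only if there is a bijection
`f : B → B` with `F_λ(μ) = f(λ) - f(λ-μ)` for all `λ, μ`. -/
theorem cocycle_functional_equation_iff_exists_bijection
    {B : Type*} [AddCommGroup B] (F : B → B → B)
    (hbij : ∀ lam : B, Function.Bijective (F lam)) :
    (∀ lam a b : B, F lam (a + b) = F lam b + F (lam - b) a)
    ↔ ∃ f : B → B, Function.Bijective f ∧ ∀ lam mu : B, F lam mu = f lam - f (lam - mu) := by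
  constructor
  · intro h
    set f : B → B := fun l => F l l with hf
    have key : ∀ lam mu : B, F lam mu = f lam - f (lam - mu) := by
      intro lam mu
      have := h lam (lam - mu) mu
      rw [sub_add_cancel] at this
      exact eq_sub_of_add_eq this.symm
    have keyneg : ∀ x : B, F 0 (-x) = f 0 - f x := by
      intro x
      have := key 0 (-x)
      simpa using this
    refine ⟨f, ⟨?_, ?_⟩, key⟩
    · intro x y hxy
      have : F 0 (-x) = F 0 (-y) := by rw [keyneg, keyneg, hxy]
      have := (hbij 0).injective this
      exact neg_injective this
    · intro y
      obtain ⟨m, hm⟩ := (hbij 0).surjective (f 0 - y)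
      refine ⟨-m, ?_⟩
      have := keyneg (-m)
      rw [neg_neg, hm] at this
      exact (sub_right_injective this).symm
  · rintro ⟨f, hfb, hff⟩
    intro lam a b
    rw [hff, hff, hff]
    abel
end

section
/- Let x₁, x₂ : A* → N_A with ε(x_i(λ)) = 1 both be vertex-IRF transformations of the trivial twist 1⊗1 (i.e. J_i(λ) := Δ(x_i(λ)) · (x_i²(λ))^{-1} · (x_i¹(λ − h^{(2)}))^{-1} has zero weight with respect to A for i = 1, 2). Then there exists a function y : A* → H with invertible values, of zero weight with respect to A and with ε(y(λ)) = 1, such that x₂(λ) = y(λ) · x₁(λ) for all λ (so that x₂ differs from x₁ by a gauge transformation and J₂ is gauge equivalent to J₁) if and only if π(x₁(λ)) = π(x₂(λ)) for all λ ∈ A*. -/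
open scoped TensorProduct

noncomputable section

variable {H : Type*} [Ring H] [HopfAlgebra ℂ H]

/-- The group algebra `ℂ[A] ⊆ H`, the linear span of the subgroup `A ≤ Hˣ`. -/
def grpAlg (A : Subgroup Hˣ) : Submodule ℂ H :=
  Submodule.span ℂ (Set.range fun a : A => ((a : Hˣ) : H))

/-- `u` belongs to the normalizer `N_A` of `ℂ[A]` in `Hˣ`, i.e. `u ℂ[A] u⁻¹ = ℂ[A]`. -/
def MemNA (A : Subgroup Hˣ) (u : Hˣ) : Prop :=
  ∀ h : H, h ∈ grpAlg A ↔ (u : H) * h * ((u⁻¹ : Hˣ) : H) ∈ grpAlg A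

lemma mem_grpAlg_dP (A : Subgroup Hˣ) [Fintype A] (μ : DChar A) : dP A μ ∈ grpAlg A := by
  refine Submodule.smul_mem _ _ (Submodule.sum_mem _ fun a _ => Submodule.smul_mem _ _ ?_)
  exact Submodule.subset_span ⟨a, rfl⟩

lemma commute_of_zw (A : Subgroup Hˣ) {v : H}
    (hv : ∀ a : A, v * ((a : Hˣ) : H) = ((a : Hˣ) : H) * v)
    {h : H} (hh : h ∈ grpAlg A) : v * h = h * v := by
  induction hh using Submodule.span_induction with
  | mem x hx => obtain ⟨a, rfl⟩ := hx; exact hv a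
  | zero => simp
  | add x y _ _ hx hy => rw [mul_add, add_mul, hx, hy]
  | smul c x _ hx => rw [mul_smul_comm, smul_mul_assoc, hx]

lemma charsum_one (G : Type*) [CommGroup G] [Fintype G] [Fintype (Additive (G →* ℂˣ))] :
    ∑ μ : Additive (G →* ℂˣ), ((Additive.toMul μ (1 : G) : ℂˣ) : ℂ) = (Fintype.card G : ℂ) := by
  have : NeZero ((Monoid.exponent G : ℂ)) :=
    ⟨Nat.cast_ne_zero.mpr Monoid.exponent_ne_zero_of_finite⟩
  have hcard : Fintype.card (Additive (G →* ℂˣ)) = Fintype.card G := by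
    obtain ⟨e⟩ := CommGroup.monoidHom_mulEquiv_of_hasEnoughRootsOfUnity G ℂ
    exact Fintype.card_congr ((Additive.toMul (α := G →* ℂˣ)).trans e.toEquiv)
  simp [hcard]

lemma charsum_ne (G : Type*) [CommGroup G] [Fintype G] [Fintype (Additive (G →* ℂˣ))]
    {c : G} (hc : c ≠ 1) :
    ∑ μ : Additive (G →* ℂˣ), ((Additive.toMul μ c : ℂˣ) : ℂ) = 0 := by
  have : NeZero ((Monoid.exponent G : ℂ)) :=
    ⟨Nat.cast_ne_zero.mpr Monoid.exponent_ne_zero_of_finite⟩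
  obtain ⟨ν, hν⟩ := CommGroup.exists_apply_ne_one_of_hasEnoughRootsOfUnity G ℂ hc
  have hre : ∑ μ : Additive (G →* ℂˣ), ((Additive.toMul μ c : ℂˣ) : ℂ)
      = ∑ μ : Additive (G →* ℂˣ), ((Additive.toMul (Additive.ofMul ν + μ) c : ℂˣ) : ℂ) :=
    (Fintype.sum_equiv (Equiv.addLeft (Additive.ofMul ν)) _ _ (fun μ => rfl)).symm
  have hfac : ∀ μ : Additive (G →* ℂˣ),
      ((Additive.toMul (Additive.ofMul ν + μ) c : ℂˣ) : ℂ)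
        = ((ν c : ℂˣ) : ℂ) * ((Additive.toMul μ c : ℂˣ) : ℂ) := by
    intro μ
    have : Additive.toMul (Additive.ofMul ν + μ) = ν * Additive.toMul μ := rfl
    rw [this, MonoidHom.mul_apply, Units.val_mul]
  rw [Finset.sum_congr rfl (fun μ _ => hfac μ), ← Finset.mul_sum] at hre
  have hν1 : ((ν c : ℂˣ) : ℂ) ≠ 1 := fun h => hν (Units.ext h)
  by_contra hS
  exact hν1 ((mul_left_eq_self₀.mp hre.symm).resolve_right hS)

lemma a_eq_sum_dP (A : Subgroup Hˣ) [Fintype A] [Fintype (DChar A)]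
    (hab : ∀ a b : A, a * b = b * a) (a : A) :
    ∑ μ : DChar A, ((Additive.toMul μ a : ℂˣ) : ℂ) • dP A μ = ((a : Hˣ) : H) := by
  classical
  letI : CommGroup ↥A := { (inferInstance : Group ↥A) with mul_comm := hab }
  have hcard : (Fintype.card A : ℂ) ≠ 0 := Nat.cast_ne_zero.mpr Fintype.card_ne_zero
  have step1 : ∀ μ : DChar A, ((Additive.toMul μ a : ℂˣ) : ℂ) • dP A μ
      = ∑ b : A, ((Fintype.card A : ℂ)⁻¹ * ((Additive.toMul μ (a * b⁻¹) : ℂˣ) : ℂ))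
          • ((b : Hˣ) : H) := by
    intro μ
    rw [dP, smul_smul, Finset.smul_sum]
    refine Finset.sum_congr rfl fun b _ => ?_
    rw [smul_smul]
    congr 1
    rw [map_mul, map_inv, Units.val_mul]
    ring
  calc ∑ μ : DChar A, ((Additive.toMul μ a : ℂˣ) : ℂ) • dP A μ
      = ∑ b : A, ∑ μ : DChar A,
          ((Fintype.card A : ℂ)⁻¹ * ((Additive.toMul μ (a * b⁻¹) : ℂˣ) : ℂ))
            • ((b : Hˣ) : H) := by
        rw [Finset.sum_congr rfl (fun μ _ => step1 μ)]; exact Finset.sum_comm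
    _ = ∑ b : A, (if b = a then (1:ℂ) else 0) • ((b : Hˣ) : H) := by
        refine Finset.sum_congr rfl fun b _ => ?_
        rw [← Finset.sum_smul, ← Finset.mul_sum]
        congr 1
        by_cases h : b = a
        · subst h
          rw [if_pos rfl]
          have h1 : b * b⁻¹ = (1 : ↥A) := mul_inv_cancel b
          rw [h1, charsum_one, inv_mul_cancel₀ hcard]
        · rw [if_neg h, charsum_ne (↥A) (fun h' => h (mul_inv_eq_one.mp h').symm), mul_zero]
    _ = ((a : Hˣ) : H) := by
        rw [Finset.sum_congr rfl (fun b _ => by rw [ite_smul, one_smul, zero_smul]),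
          Finset.sum_ite_eq' Finset.univ a]
        simp

/-- **Theorem (gauge equivalence of vertex-IRF transformations of `1 ⊗ 1`).**
Two vertex-IRF transformations `x₁, x₂ : A* → N_A` of the trivial twist `1 ⊗ 1` differ by a
gauge transformation (an invertible-valued zero weight function `y : A* → H` with
`ε(y(λ)) = 1` and `x₂ = y x₁`) if and only if they induce the same permutations of `A*`,
i.e. conjugation by `x₁(λ)` and by `x₂(λ)` agree on all the idempotents `P_μ`. -/
theorem vertexIRF_gauge_equivalent_iff_same_permutation
    {H : Type*} [Ring H] [HopfAlgebra ℂ H]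
    (A : Subgroup Hˣ) [Fintype A] [Fintype (DChar A)]
    (hgl : ∀ a : A, IsGroupLike ((a : Hˣ) : H))
    (hab : ∀ a b : A, a * b = b * a)
    (x₁ x₂ : DChar A → Hˣ)
    (hxN₁ : ∀ lam, MemNA A (x₁ lam))
    (hxN₂ : ∀ lam, MemNA A (x₂ lam))
    (hxe₁ : ∀ lam, Bialgebra.counitAlgHom ℂ H ((x₁ lam : Hˣ) : H) = 1)
    (hxe₂ : ∀ lam, Bialgebra.counitAlgHom ℂ H ((x₂ lam : Hˣ) : H) = 1)
    (hzw₁ : ∀ lam, ZeroWeight₂ A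
      (Bialgebra.comulAlgHom ℂ H ((x₁ lam : Hˣ) : H)
        * Ring.inverse ((1 : H) ⊗ₜ[ℂ] ((x₁ lam : Hˣ) : H))
        * Ring.inverse (x1shift A (fun ν => ((x₁ ν : Hˣ) : H)) lam)))
    (hzw₂ : ∀ lam, ZeroWeight₂ A
      (Bialgebra.comulAlgHom ℂ H ((x₂ lam : Hˣ) : H)
        * Ring.inverse ((1 : H) ⊗ₜ[ℂ] ((x₂ lam : Hˣ) : H))
        * Ring.inverse (x1shift A (fun ν => ((x₂ ν : Hˣ) : H)) lam))) :
    (∃ y : DChar A → H,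
      (∀ lam, IsUnit (y lam)) ∧
      (∀ lam, ZeroWeight₁ A (y lam)) ∧
      (∀ lam, Bialgebra.counitAlgHom ℂ H (y lam) = 1) ∧
      (∀ lam, ((x₂ lam : Hˣ) : H) = y lam * ((x₁ lam : Hˣ) : H)))
    ↔ (∀ lam (μ : DChar A),
        ((x₁ lam : Hˣ) : H) * dP A μ * (((x₁ lam)⁻¹ : Hˣ) : H)
          = ((x₂ lam : Hˣ) : H) * dP A μ * (((x₂ lam)⁻¹ : Hˣ) : H)) := by
  classical
  constructor
  · rintro ⟨y, hy1, hy2, hy3, hy4⟩ lam μ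
    set u := (hy1 lam).unit with hu
    have huv : (u : H) = y lam := (hy1 lam).unit_spec
    have hx2 : x₂ lam = u * x₁ lam := Units.ext (by rw [Units.val_mul, huv]; exact hy4 lam)
    have hQ : ((x₁ lam : Hˣ) : H) * dP A μ * (((x₁ lam)⁻¹ : Hˣ) : H) ∈ grpAlg A :=
      (hxN₁ lam (dP A μ)).mp (mem_grpAlg_dP A μ)
    have hyc : (u : H) * (((x₁ lam : Hˣ) : H) * dP A μ * (((x₁ lam)⁻¹ : Hˣ) : H))
        = (((x₁ lam : Hˣ) : H) * dP A μ * (((x₁ lam)⁻¹ : Hˣ) : H)) * (u : H) := by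
      rw [huv]; exact commute_of_zw A (hy2 lam) hQ
    rw [hx2, mul_inv_rev, Units.val_mul, Units.val_mul]
    symm
    calc (u : H) * ((x₁ lam : Hˣ) : H) * dP A μ * ((((x₁ lam)⁻¹ : Hˣ) : H) * ((u⁻¹ : Hˣ) : H))
        = (u : H) * (((x₁ lam : Hˣ) : H) * dP A μ * (((x₁ lam)⁻¹ : Hˣ) : H)) * ((u⁻¹ : Hˣ) : H) := by
          simp only [mul_assoc]
      _ = (((x₁ lam : Hˣ) : H) * dP A μ * (((x₁ lam)⁻¹ : Hˣ) : H)) * ((u : H) * ((u⁻¹ : Hˣ) : H)) := by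
          rw [hyc, mul_assoc]
      _ = ((x₁ lam : Hˣ) : H) * dP A μ * (((x₁ lam)⁻¹ : Hˣ) : H) := by
          rw [Units.mul_inv, mul_one]
  · intro hperm
    refine ⟨fun lam => ((x₂ lam * (x₁ lam)⁻¹ : Hˣ) : H),
      fun lam => (x₂ lam * (x₁ lam)⁻¹).isUnit, ?_, ?_, ?_⟩
    · -- zero weight
      intro lam a
      set z : Hˣ := (x₂ lam)⁻¹ * x₁ lam with hz_def
      have hzP : ∀ μ : DChar A, (z : H) * dP A μ = dP A μ * (z : H) := by
        intro μ
        have h := hperm lam μ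
        calc (z : H) * dP A μ
            = ((x₂ lam)⁻¹ : Hˣ) * (((x₁ lam : Hˣ) : H) * dP A μ * (((x₁ lam)⁻¹ : Hˣ) : H))
              * ((x₁ lam : Hˣ) : H) := by
              simp only [hz_def, Units.val_mul, mul_assoc, Units.inv_mul, mul_one]
          _ = ((x₂ lam)⁻¹ : Hˣ) * (((x₂ lam : Hˣ) : H) * dP A μ * (((x₂ lam)⁻¹ : Hˣ) : H))
              * ((x₁ lam : Hˣ) : H) := by rw [h]
          _ = dP A μ * (z : H) := by
              simp only [hz_def, Units.val_mul, mul_assoc, Units.inv_mul_cancel_left]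
      have hzA : ∀ c : A, (z : H) * ((c : Hˣ) : H) = ((c : Hˣ) : H) * (z : H) := by
        intro c
        rw [← a_eq_sum_dP A hab c, Finset.mul_sum, Finset.sum_mul]
        exact Finset.sum_congr rfl fun μ _ => by
          rw [mul_smul_comm, smul_mul_assoc, hzP μ]
      set b' : Hˣ := (x₂ lam)⁻¹ * (a : Hˣ) * x₂ lam with hb'_def
      have hb'mem : ((b' : Hˣ) : H) ∈ grpAlg A := by
        rw [hxN₂ lam]
        have : ((x₂ lam : Hˣ) : H) * (b' : H) * (((x₂ lam)⁻¹ : Hˣ) : H) = ((a : Hˣ) : H) := by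
          simp only [hb'_def, Units.val_mul, mul_assoc, Units.mul_inv_cancel_left,
            Units.mul_inv, mul_one]
        rw [this]
        exact Submodule.subset_span ⟨a, rfl⟩
      have hzb'H : (z : H) * (b' : H) = (b' : H) * (z : H) := commute_of_zw A hzA hb'mem
      have hc : Commute z b' := Units.ext (by simpa [Units.val_mul] using hzb'H)
      have hc2 : Commute ((MulAut.conj (x₂ lam)) z⁻¹) ((MulAut.conj (x₂ lam)) b') :=
        (hc.inv_left).map (MulAut.conj (x₂ lam)).toMonoidHom
      have e1 : (MulAut.conj (x₂ lam)) z⁻¹ = x₂ lam * (x₁ lam)⁻¹ := by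
        simp only [hz_def, MulAut.conj_apply, mul_inv_rev, inv_inv]
        group
      have e2 : (MulAut.conj (x₂ lam)) b' = (a : Hˣ) := by
        simp only [hb'_def, MulAut.conj_apply]
        group
      rw [e1, e2] at hc2
      have := congrArg (Units.val) hc2.eq
      simpa [Units.val_mul] using this
    · -- counit
      intro lam
      beta_reduce
      have h := map_mul (Bialgebra.counitAlgHom ℂ H) ((x₁ lam : Hˣ) : H) (((x₁ lam)⁻¹ : Hˣ) : H)
      rw [Units.mul_inv, map_one, hxe₁ lam, one_mul] at h
      rw [Units.val_mul, map_mul, hxe₂ lam, one_mul, ← h]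
    · -- factorization
      intro lam
      beta_reduce
      rw [Units.val_mul, mul_assoc, Units.inv_mul, mul_one]
end
end
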